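/- arXiv:2001.07812 — 5 statements merged into one kernel-verified Lean document; each statement's English description precedes it below -/
import Mathlib

section
/- If p > 1/2 is fixed, then the probability that the random cubical complex Q_2(n,p) contains at least one maximal 1-face tends to 0 as n → ∞. -/
open Finset

/-- The 1-skeleton of the `n`-dimensional cube. -/
def cubeGraph (n : ℕ) : SimpleGraph (Fin n → Bool) where
  Adj u v := (Finset.univ.filter fun i => u i ≠ v i).card = 1
  symm := by
    constructor
    intro u v h
    rw [show (Finset.univ.filter fun i => v i ≠ u i)
        = (Finset.univ.filter fun i => u i ≠ v i) from
      Finset.filter_congr fun i _ => ne_comm]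
    exact h
  loopless := by
    constructor
    intro u h
    simp at h

instance cubeGraphAdjDec (n : ℕ) : DecidableRel (cubeGraph n).Adj := fun u v =>
  decidable_of_iff ((Finset.univ.filter fun i => u i ≠ v i).card = 1) Iff.rfl

/-- A 2-face of the `n`-cube in star notation: two free (`none`) coordinates and
`n-2` fixed binary coordinates. Its boundary is a 4-cycle. -/
abbrev TwoFace (n : ℕ) :=
  {x : Fin n → Option Bool // (Finset.univ.filter fun i => x i = none).card = 2}

/-- A vertex `v` of the cube lies on a face `x` (in star notation) iff `v` agrees
with every fixed coordinate of `x`. -/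
def inFace {n : ℕ} (x : Fin n → Option Bool) (v : Fin n → Bool) : Prop :=
  ∀ i b, x i = some b → v i = b

instance {n : ℕ} (x : Fin n → Option Bool) (v : Fin n → Bool) : Decidable (inFace x v) := by
  unfold inFace; infer_instance


/-- The probability, in the random 2-dimensional cubical complex `Q_2(n,p)` (each 2-face
included independently with probability `p`), of seeing exactly the configuration `ω`
of 2-faces. -/
def faceProb (n : ℕ) (p : ℝ) (ω : TwoFace n → Bool) : ℝ :=
  ∏ x : TwoFace n, if ω x then p else 1 - p

/-- The number of maximal 1-faces of the complex with face configuration `ω`: edges of the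
`n`-cube contained in no included 2-face. -/
def maximalCount (n : ℕ) (ω : TwoFace n → Bool) : ℕ :=
  ((cubeGraph n).edgeFinset.filter fun e =>
    ∀ x : TwoFace n, ω x = true → ¬ ∀ v, v ∈ e → inFace x.1 v).card


section Aux
variable {n : ℕ}

lemma sum_faceProb_false_on (n : ℕ) (p : ℝ) (S : Finset (TwoFace n)) :
    ∑ ω ∈ Finset.univ.filter (fun ω : TwoFace n → Bool => ∀ x ∈ S, ω x = false),
      faceProb n p ω = (1 - p) ^ S.card := by
  classical
  set g : TwoFace n → Bool → ℝ := fun x b =>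
    if x ∈ S then (if b then 0 else 1 - p) else (if b then p else 1 - p) with hg
  have key : ∏ x : TwoFace n, ∑ b : Bool, g x b
      = ∑ ω : TwoFace n → Bool, ∏ x, g x (ω x) := Fintype.prod_sum g
  have hsplit : (∑ ω : TwoFace n → Bool, ∏ x, g x (ω x))
      = ∑ ω ∈ Finset.univ.filter (fun ω : TwoFace n → Bool => ∀ x ∈ S, ω x = false),
          faceProb n p ω := by
    rw [← Finset.sum_filter_add_sum_filter_not Finset.univ
      (fun ω : TwoFace n → Bool => ∀ x ∈ S, ω x = false) (fun ω => ∏ x, g x (ω x))]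
    have h1 : ∀ ω ∈ Finset.univ.filter (fun ω : TwoFace n → Bool => ∀ x ∈ S, ω x = false),
        (∏ x, g x (ω x)) = faceProb n p ω := by
      intro ω hω
      rw [Finset.mem_filter] at hω
      unfold faceProb
      refine Finset.prod_congr rfl fun x _ => ?_
      by_cases hx : x ∈ S
      · rw [hω.2 x hx]; simp [hg, hx]
      · simp [hg, hx]
    have h2 : ∀ ω ∈ Finset.univ.filter (fun ω : TwoFace n → Bool => ¬ ∀ x ∈ S, ω x = false),
        (∏ x, g x (ω x)) = 0 := by
      intro ω hω
      rw [Finset.mem_filter] at hω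
      push_neg at hω
      obtain ⟨x, hxS, hxω⟩ := hω.2
      have : ω x = true := by simpa using hxω
      exact Finset.prod_eq_zero (Finset.mem_univ x) (by simp [hg, hxS, this])
    rw [Finset.sum_congr rfl h1, Finset.sum_congr rfl h2]
    simp
  rw [← hsplit, ← key]
  have : ∀ x : TwoFace n, (∑ b : Bool, g x b) = if x ∈ S then 1 - p else 1 := by
    intro x
    rw [Fintype.sum_bool]
    by_cases hx : x ∈ S <;> simp [hg, hx]
  rw [Finset.prod_congr rfl (fun x _ => this x), Finset.prod_ite_mem, Finset.univ_inter,
    Finset.prod_const]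

end Aux
lemma card_faces_ge (n : ℕ) (e : Sym2 (Fin n → Bool)) (he : e ∈ (cubeGraph n).edgeFinset) :
    n - 1 ≤ (Finset.univ.filter fun x : TwoFace n => ∀ v ∈ e, inFace x.1 v).card := by
  classical
  induction e using Sym2.inductionOn with
  | hf u w =>
    rw [SimpleGraph.mem_edgeFinset, SimpleGraph.mem_edgeSet] at he
    obtain ⟨i, hi⟩ := Finset.card_eq_one.mp he
    have hukw : ∀ k, k ≠ i → w k = u k := by
      intro k hk
      by_contra h
      have : k ∈ Finset.univ.filter fun j => u j ≠ w j := by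
        simp only [Finset.mem_filter, Finset.mem_univ, true_and]
        exact fun hh => h hh.symm
      rw [hi, Finset.mem_singleton] at this
      exact hk this
    set F : Fin n → (Fin n → Option Bool) := fun j k =>
      if k = i ∨ k = j then none else some (u k) with hF
    have hFcard : ∀ j, j ≠ i → (Finset.univ.filter fun k => F j k = none).card = 2 := by
      intro j hj
      have : (Finset.univ.filter fun k => F j k = none) = {i, j} := by
        ext k
        simp only [Finset.mem_filter, Finset.mem_univ, true_and, Finset.mem_insert,
          Finset.mem_singleton, hF]
        by_cases hk : k = i ∨ k = j <;> simp [hk]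
      rw [this, Finset.card_insert_of_notMem (by simp [Ne.symm hj]), Finset.card_singleton]
    have hin : ∀ j, (hj : j ≠ i) →
        (⟨F j, hFcard j hj⟩ : TwoFace n) ∈
          (Finset.univ.filter fun x : TwoFace n => ∀ v ∈ s(u, w), inFace x.1 v) := by
      intro j hj
      simp only [Finset.mem_filter, Finset.mem_univ, true_and]
      intro v hv
      intro k b hkb
      have hk : ¬ (k = i ∨ k = j) := by
        by_contra h
        simp [hF, h] at hkb
      have hb : b = u k := by
        simp [hF, hk] at hkb
        exact hkb.symm
      rw [Sym2.mem_iff] at hv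
      rcases hv with rfl | rfl
      · exact hb.symm ▸ rfl
      · rw [hb, hukw k (fun h => hk (Or.inl h))]
    -- injection
    have hinj : Set.InjOn F ↑(Finset.univ.erase i) := by
      intro j hj j' hj' hFeq
      simp only [Finset.coe_erase, Set.mem_diff, Finset.mem_coe] at hj hj'
      by_contra hne
      have h1 : F j j = none := by simp [hF]
      have h2 : F j' j = some (u j) := by
        have : ¬ (j = i ∨ j = j') := by
          rintro (h | h)
          · exact (by simpa using hj : j ≠ i) h
          · exact hne h
        simp [hF, this]
      rw [hFeq] at h1
      rw [h1] at h2
      cases h2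
    calc n - 1 = (Finset.univ.erase i).card := by
          rw [Finset.card_erase_of_mem (Finset.mem_univ i)]; simp
      _ = ((Finset.univ.erase i).image F).card :=
          (Finset.card_image_of_injOn hinj).symm
      _ ≤ ((Finset.univ.filter fun x : TwoFace n =>
              ∀ v ∈ s(u, w), inFace x.1 v).image Subtype.val).card := by
          apply Finset.card_le_card
          intro y hy
          rw [Finset.mem_image] at hy
          obtain ⟨j, hj, rfl⟩ := hy
          have hj' : j ≠ i := by simpa using (Finset.mem_erase.mp hj).1
          exact Finset.mem_image.mpr ⟨⟨F j, hFcard j hj'⟩, hin j hj', rfl⟩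
      _ = (Finset.univ.filter fun x : TwoFace n => ∀ v ∈ s(u, w), inFace x.1 v).card :=
          Finset.card_image_of_injOn (fun a _ b _ h => Subtype.ext h)

lemma cube_degree_le (n : ℕ) (u : Fin n → Bool) : (cubeGraph n).degree u ≤ n := by
  classical
  rw [← SimpleGraph.card_neighborFinset_eq_degree]
  have hsub : (cubeGraph n).neighborFinset u ⊆
      Finset.univ.image (fun i => Function.update u i (!u i)) := by
    intro v hv
    rw [SimpleGraph.mem_neighborFinset] at hv
    obtain ⟨i, hi⟩ := Finset.card_eq_one.mp hv
    refine Finset.mem_image.mpr ⟨i, Finset.mem_univ i, ?_⟩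
    funext k
    by_cases hk : k = i
    · subst hk
      have : u k ≠ v k := by
        have : k ∈ Finset.univ.filter fun j => u j ≠ v j := hi ▸ Finset.mem_singleton_self k
        simpa using this
      rw [Function.update_self]
      revert this; cases u k <;> cases v k <;> simp
    · have : u k = v k := by
        by_contra h
        have : k ∈ Finset.univ.filter fun j => u j ≠ v j := by simpa using h
        rw [hi, Finset.mem_singleton] at this
        exact hk this
      rw [Function.update_of_ne hk, this]
  calc ((cubeGraph n).neighborFinset u).card
      ≤ (Finset.univ.image (fun i : Fin n => Function.update u i (!u i))).card :=
        Finset.card_le_card hsub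
    _ ≤ (Finset.univ : Finset (Fin n)).card := Finset.card_image_le
    _ = n := by simp

lemma edge_count_le (n : ℕ) : (cubeGraph n).edgeFinset.card ≤ 2 ^ n * n := by
  classical
  have h2 : 2 * (cubeGraph n).edgeFinset.card = ∑ v, (cubeGraph n).degree v :=
    ((cubeGraph n).sum_degrees_eq_twice_card_edges).symm
  have h3 : (∑ v, (cubeGraph n).degree v) ≤ 2 ^ n * n := by
    calc (∑ v, (cubeGraph n).degree v) ≤ ∑ _v : Fin n → Bool, n :=
          Finset.sum_le_sum fun v _ => cube_degree_le n v
      _ = 2 ^ n * n := by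
          rw [Finset.sum_const, Finset.card_univ]
          simp [Fintype.card_fun]
  omega
/-- For fixed `p > 1/2`, the probability that the random cubical complex `Q_2(n,p)`
contains at least one maximal 1-face tends to `0` as `n → ∞`. -/
theorem no_maximal_edges_whp (p : ℝ) (hp : 1 / 2 < p) (hp1 : p ≤ 1) :
    Filter.Tendsto
      (fun n : ℕ =>
        ∑ ω ∈ Finset.univ.filter fun ω : TwoFace n → Bool => 0 < maximalCount n ω,
          faceProb n p ω)
      Filter.atTop (nhds 0) := by
  classical
  have hp0 : (0:ℝ) ≤ p := by linarith
  have hq0 : (0:ℝ) ≤ 1 - p := by linarith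
  have hq1 : (1:ℝ) - p ≤ 1 := by linarith
  have h2q0 : (0:ℝ) ≤ 2 * (1 - p) := by linarith
  have h2q : 2 * (1 - p) < 1 := by linarith
  have hfp : ∀ n (ω : TwoFace n → Bool), 0 ≤ faceProb n p ω := fun n ω =>
    Finset.prod_nonneg fun x _ => by by_cases h : ω x <;> simp [h, hp0, hq0]
  have hbound : ∀ n : ℕ,
      (∑ ω ∈ Finset.univ.filter fun ω : TwoFace n → Bool => 0 < maximalCount n ω,
          faceProb n p ω) ≤ ((2:ℝ)^n * n) * (1 - p)^(n-1) := by
    intro n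
    have step1 : (∑ ω ∈ Finset.univ.filter fun ω : TwoFace n → Bool => 0 < maximalCount n ω,
          faceProb n p ω)
        ≤ ∑ ω : TwoFace n → Bool, (maximalCount n ω : ℝ) * faceProb n p ω := by
      calc (∑ ω ∈ Finset.univ.filter fun ω : TwoFace n → Bool => 0 < maximalCount n ω,
              faceProb n p ω)
          ≤ ∑ ω ∈ Finset.univ.filter fun ω : TwoFace n → Bool => 0 < maximalCount n ω,
              (maximalCount n ω : ℝ) * faceProb n p ω := by
            refine Finset.sum_le_sum fun ω hω => ?_
            rw [Finset.mem_filter] at hω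
            have h1 : (1:ℝ) ≤ (maximalCount n ω : ℝ) := by exact_mod_cast hω.2
            nlinarith [hfp n ω]
        _ ≤ ∑ ω : TwoFace n → Bool, (maximalCount n ω : ℝ) * faceProb n p ω :=
            Finset.sum_le_sum_of_subset_of_nonneg (Finset.subset_univ _)
              (fun ω _ _ => mul_nonneg (by positivity) (hfp n ω))
    have step2 : (∑ ω : TwoFace n → Bool, (maximalCount n ω : ℝ) * faceProb n p ω)
        = ∑ e ∈ (cubeGraph n).edgeFinset,
            (1 - p) ^ (Finset.univ.filter fun x : TwoFace n =>
              ∀ v ∈ e, inFace x.1 v).card := by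
      have hcount : ∀ ω : TwoFace n → Bool, (maximalCount n ω : ℝ)
          = ∑ e ∈ (cubeGraph n).edgeFinset,
              (if ∀ x : TwoFace n, ω x = true → ¬ ∀ v, v ∈ e → inFace x.1 v
               then (1:ℝ) else 0) := by
        intro ω
        unfold maximalCount
        rw [Finset.card_filter]
        push_cast
        rfl
      calc (∑ ω : TwoFace n → Bool, (maximalCount n ω : ℝ) * faceProb n p ω)
          = ∑ ω : TwoFace n → Bool, ∑ e ∈ (cubeGraph n).edgeFinset,
              (if ∀ x : TwoFace n, ω x = true → ¬ ∀ v, v ∈ e → inFace x.1 v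
               then faceProb n p ω else 0) := by
            refine Finset.sum_congr rfl fun ω _ => ?_
            rw [hcount ω, Finset.sum_mul]
            refine Finset.sum_congr rfl fun e _ => ?_
            by_cases h : ∀ x : TwoFace n, ω x = true → ¬ ∀ v, v ∈ e → inFace x.1 v <;>
              simp [h]
        _ = ∑ e ∈ (cubeGraph n).edgeFinset, ∑ ω : TwoFace n → Bool,
              (if ∀ x : TwoFace n, ω x = true → ¬ ∀ v, v ∈ e → inFace x.1 v
               then faceProb n p ω else 0) := Finset.sum_comm
        _ = ∑ e ∈ (cubeGraph n).edgeFinset,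
            (1 - p) ^ (Finset.univ.filter fun x : TwoFace n =>
              ∀ v ∈ e, inFace x.1 v).card := by
            refine Finset.sum_congr rfl fun e _ => ?_
            rw [← Finset.sum_filter]
            rw [← sum_faceProb_false_on n p
              (Finset.univ.filter fun x : TwoFace n => ∀ v ∈ e, inFace x.1 v)]
            refine Finset.sum_congr ?_ fun _ _ => rfl
            apply Finset.filter_congr
            intro ω _
            constructor
            · intro h x hx
              rw [Finset.mem_filter] at hx
              by_contra hfalse
              have hωx : ω x = true := by
                cases hωx : ω x
                · exact absurd hωx hfalse
                · rfl
              exact h x hωx hx.2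
            · intro h x hωx hall
              have hx : x ∈ Finset.univ.filter fun x : TwoFace n =>
                  ∀ v ∈ e, inFace x.1 v := by
                simp only [Finset.mem_filter, Finset.mem_univ, true_and]
                exact hall
              rw [h x hx] at hωx
              exact Bool.noConfusion hωx
    have step3 : (∑ e ∈ (cubeGraph n).edgeFinset,
            (1 - p) ^ (Finset.univ.filter fun x : TwoFace n =>
              ∀ v ∈ e, inFace x.1 v).card) ≤ ((2:ℝ)^n * n) * (1 - p)^(n-1) := by
      calc (∑ e ∈ (cubeGraph n).edgeFinset,
            (1 - p) ^ (Finset.univ.filter fun x : TwoFace n =>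
              ∀ v ∈ e, inFace x.1 v).card)
          ≤ ∑ _e ∈ (cubeGraph n).edgeFinset, (1 - p)^(n-1) := by
            refine Finset.sum_le_sum fun e he => ?_
            exact pow_le_pow_of_le_one hq0 hq1 (card_faces_ge n e he)
        _ = ((cubeGraph n).edgeFinset.card : ℝ) * (1 - p)^(n-1) := by
            rw [Finset.sum_const, nsmul_eq_mul]
        _ ≤ ((2:ℝ)^n * n) * (1 - p)^(n-1) := by
            have h1 : ((cubeGraph n).edgeFinset.card : ℝ) ≤ (2:ℝ)^n * n := by
              have := edge_count_le n
              exact_mod_cast this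
            exact mul_le_mul_of_nonneg_right h1 (pow_nonneg hq0 _)
    linarith [step1, step2 ▸ step3]
  have hnonneg : ∀ n : ℕ,
      0 ≤ ∑ ω ∈ Finset.univ.filter fun ω : TwoFace n → Bool => 0 < maximalCount n ω,
          faceProb n p ω := fun n => Finset.sum_nonneg fun ω _ => hfp n ω
  refine squeeze_zero hnonneg hbound ?_
  rw [← Filter.tendsto_add_atTop_iff_nat 1]
  have h1 : Filter.Tendsto (fun m : ℕ => (m:ℝ) * (2*(1-p))^m) Filter.atTop (nhds 0) := by
    have := tendsto_pow_const_mul_const_pow_of_lt_one 1 h2q0 h2q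
    simpa using this
  have h2 : Filter.Tendsto (fun m : ℕ => (2*(1-p))^m) Filter.atTop (nhds 0) :=
    tendsto_pow_atTop_nhds_zero_of_lt_one h2q0 h2q
  have h3 : Filter.Tendsto
      (fun m : ℕ => 2 * ((m:ℝ) * (2*(1-p))^m) + 2 * (2*(1-p))^m)
      Filter.atTop (nhds 0) := by
    have := (h1.const_mul 2).add (h2.const_mul 2)
    simpa using this
  refine h3.congr fun m => ?_
  show 2 * ((m:ℝ) * (2*(1-p))^m) + 2 * (2*(1-p))^m
      = (2:ℝ)^(m+1) * ((m:ℕ)+1 : ℕ) * (1 - p)^((m+1)-1)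
  push_cast
  rw [mul_pow]
  ring
end

section
/- If p ≤ 1/2 is fixed, then with probability tending to 1 as n → ∞, the random cubical complex Q_2(n,p) contains at least 2 maximal 1-faces. -/
open Finset

namespace Q2
variable {n : ℕ} {p : ℝ}

/-- indicator that all faces in `S` are absent -/
noncomputable def ind (S : Finset (TwoFace n)) (ω : TwoFace n → Bool) : ℝ :=
  if ∀ x ∈ S, ω x = false then 1 else 0

lemma ind_nonneg (S : Finset (TwoFace n)) (ω : TwoFace n → Bool) : 0 ≤ ind S ω := by
  unfold ind; split <;> norm_num

lemma ind_mul_ind (S T : Finset (TwoFace n)) (ω : TwoFace n → Bool) :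
    ind S ω * ind T ω = ind (S ∪ T) ω := by
  unfold ind
  have h : (∀ x ∈ S ∪ T, ω x = false) ↔ (∀ x ∈ S, ω x = false) ∧ (∀ x ∈ T, ω x = false) := by
    constructor
    · intro h
      exact ⟨fun x hx => h x (mem_union_left _ hx), fun x hx => h x (mem_union_right _ hx)⟩
    · rintro ⟨h1, h2⟩ x hx
      rcases mem_union.1 hx with h | h
      exacts [h1 x h, h2 x h]
  rw [show (if ∀ x ∈ S ∪ T, ω x = false then (1:ℝ) else 0)
      = if (∀ x ∈ S, ω x = false) ∧ (∀ x ∈ T, ω x = false) then 1 else 0 from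
    if_congr h rfl rfl]
  by_cases hS : ∀ x ∈ S, ω x = false <;> by_cases hT : ∀ x ∈ T, ω x = false
  · rw [if_pos hS, if_pos hT, if_pos ⟨hS, hT⟩, mul_one]
  · rw [if_neg hT, mul_zero]
    exact (if_neg fun h' : (∀ x ∈ S, ω x = false) ∧ (∀ x ∈ T, ω x = false) => hT h'.2).symm
  · rw [if_neg hS, zero_mul]
    exact (if_neg fun h' : (∀ x ∈ S, ω x = false) ∧ (∀ x ∈ T, ω x = false) => hS h'.1).symm
  · rw [if_neg hS, zero_mul]
    exact (if_neg fun h' : (∀ x ∈ S, ω x = false) ∧ (∀ x ∈ T, ω x = false) => hS h'.1).symm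

lemma sum_prod_bool (g : TwoFace n → Bool → ℝ) :
    ∑ ω : TwoFace n → Bool, ∏ x, g x (ω x) = ∏ x, (g x false + g x true) := by
  classical
  have : ∏ x, (g x false + g x true) = ∏ x, ∑ b ∈ (univ : Finset Bool), g x b := by
    apply Finset.prod_congr rfl
    intro x _
    rw [Fintype.sum_bool]
    ring
  rw [this, Finset.prod_univ_sum]
  rw [Fintype.piFinset_univ]

lemma faceProb_mul_ind (S : Finset (TwoFace n)) (ω : TwoFace n → Bool) :
    faceProb n p ω * ind S ω
      = ∏ x, (if x ∈ S ∧ ω x = true then 0 else if ω x then p else 1 - p) := by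
  unfold faceProb ind
  by_cases h : ∀ x ∈ S, ω x = false
  · rw [if_pos h, mul_one]
    apply Finset.prod_congr rfl
    intro x _
    have : ¬ (x ∈ S ∧ ω x = true) := by
      rintro ⟨hx, hx'⟩; rw [h x hx] at hx'; exact Bool.false_ne_true hx'
    rw [if_neg this]
  · rw [if_neg h, mul_zero]
    push_neg at h
    obtain ⟨x₀, hx₀, hx₀'⟩ := h
    refine (Finset.prod_eq_zero (mem_univ x₀) ?_).symm
    rw [if_pos ⟨hx₀, by simpa using hx₀'⟩]

lemma sum_faceProb_ind (S : Finset (TwoFace n)) :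
    ∑ ω : TwoFace n → Bool, faceProb n p ω * ind S ω = (1 - p) ^ S.card := by
  classical
  rw [Finset.sum_congr rfl fun ω _ => faceProb_mul_ind S ω]
  rw [sum_prod_bool fun x b => if x ∈ S ∧ b = true then 0 else if b then p else 1 - p]
  have : ∀ x : TwoFace n,
      ((if x ∈ S ∧ false = true then (0:ℝ) else if false then p else 1 - p)
        + (if x ∈ S ∧ true = true then 0 else if true then p else 1 - p))
      = if x ∈ S then 1 - p else 1 := by
    intro x
    by_cases hx : x ∈ S <;> simp [hx]
  rw [Finset.prod_congr rfl fun x _ => this x]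
  rw [Finset.prod_ite_mem, Finset.univ_inter, Finset.prod_const]

lemma sum_faceProb (n : ℕ) (p : ℝ) :
    ∑ ω : TwoFace n → Bool, faceProb n p ω = 1 := by
  have := sum_faceProb_ind (n := n) (p := p) ∅
  simpa [ind] using this

lemma faceProb_nonneg (hp0 : 0 ≤ p) (hp1 : p ≤ 1) (ω : TwoFace n → Bool) :
    0 ≤ faceProb n p ω := by
  unfold faceProb
  apply Finset.prod_nonneg
  intro x _
  split <;> linarith

/-- the 2-faces containing the edge `e` -/
def efaces (e : Sym2 (Fin n → Bool)) : Finset (TwoFace n) :=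
  univ.filter fun x => ∀ v ∈ e, inFace x.1 v

lemma adj_iff {u v : Fin n → Bool} :
    (cubeGraph n).Adj u v ↔ (Finset.univ.filter fun i => u i ≠ v i).card = 1 := Iff.rfl

/-- from adjacency, extract the unique flipped coordinate -/
lemma adj_exists {u v : Fin n → Bool} (h : (cubeGraph n).Adj u v) :
    ∃ i, u i ≠ v i ∧ ∀ j, j ≠ i → u j = v j := by
  rw [adj_iff, Finset.card_eq_one] at h
  obtain ⟨i, hi⟩ := h
  refine ⟨i, ?_, ?_⟩
  · have : i ∈ Finset.univ.filter fun j => u j ≠ v j := by rw [hi]; exact mem_singleton_self i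
    exact (mem_filter.1 this).2
  · intro j hj
    by_contra hne
    have : j ∈ Finset.univ.filter fun j => u j ≠ v j := mem_filter.2 ⟨mem_univ _, hne⟩
    rw [hi, mem_singleton] at this
    exact hj this

def mkFace (u : Fin n → Bool) (i k : Fin n) : Fin n → Option Bool :=
  fun j => if j = i ∨ j = k then none else some (u j)

lemma mkFace_filter (u : Fin n → Bool) {i k : Fin n} (h : i ≠ k) :
    (Finset.univ.filter fun j => mkFace u i k j = none) = {i, k} := by
  ext j
  simp only [mem_filter, mem_univ, true_and, mkFace, mem_insert, mem_singleton]
  by_cases hj : j = i ∨ j = k <;> simp [hj] <;> tauto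

lemma mkFace_card (u : Fin n → Bool) {i k : Fin n} (h : i ≠ k) :
    (Finset.univ.filter fun j => mkFace u i k j = none).card = 2 := by
  rw [mkFace_filter u h, card_insert_of_notMem (by simpa using h), card_singleton]

lemma mem_efaces {x : TwoFace n} {u v : Fin n → Bool} :
    x ∈ efaces s(u, v) ↔ inFace x.1 u ∧ inFace x.1 v := by
  simp only [efaces, mem_filter, mem_univ, true_and, Sym2.mem_iff]
  constructor
  · intro h; exact ⟨h u (Or.inl rfl), h v (Or.inr rfl)⟩
  · rintro ⟨h1, h2⟩ w (rfl | rfl) <;> assumption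

lemma efaces_card {u v : Fin n → Bool} (h : (cubeGraph n).Adj u v) :
    (efaces s(u, v)).card = n - 1 := by
  obtain ⟨i, hi, hoff⟩ := adj_exists h
  have hcard : (Finset.univ.erase i).card = n - 1 := by
    rw [card_erase_of_mem (mem_univ i), card_univ, Fintype.card_fin]
  rw [← hcard]
  refine (Finset.card_bij (fun k hk => ⟨mkFace u i k, mkFace_card u (Ne.symm (mem_erase.1 hk).1)⟩)
    ?_ ?_ ?_).symm
  · intro k hk
    rw [mem_efaces]
    constructor
    · intro j b hjb
      simp only [mkFace] at hjb
      split at hjb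
      · exact absurd hjb (by simp)
      · exact Option.some_injective _ hjb
    · intro j b hjb
      simp only [mkFace] at hjb
      split at hjb
      · exact absurd hjb (by simp)
      · rename_i hcond
        push_neg at hcond
        rw [← hoff j hcond.1]
        exact Option.some_injective _ hjb
  · intro k hk k' hk' heq
    by_contra hne
    have hki : k ≠ i := (mem_erase.1 hk).1
    have := congrArg (fun z => z.1 k) heq
    simp only [mkFace] at this
    rw [if_pos (by tauto), if_neg (by push_neg; exact ⟨hki, hne⟩)] at this
    exact absurd this (by simp)
  · intro x hx
    rw [mem_efaces] at hx
    obtain ⟨hxu, hxv⟩ := hx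
    have hxi : x.1 i = none := by
      cases hcase : x.1 i with
      | none => rfl
      | some c =>
        have h1 := hxu i c hcase
        have h2 := hxv i c hcase
        rw [h1] at hi; rw [h2] at hi; exact absurd rfl hi
    obtain ⟨a, b, hab, hS⟩ := Finset.card_eq_two.1 x.2
    have hiS : i ∈ ({a, b} : Finset (Fin n)) := by
      rw [← hS]; exact mem_filter.2 ⟨mem_univ _, hxi⟩
    -- k := the other free coordinate
    obtain ⟨k, hki, hSik⟩ : ∃ k, k ≠ i ∧ ({a, b} : Finset (Fin n)) = {i, k} := by
      rcases mem_insert.1 hiS with rfl | hib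
      · exact ⟨b, fun hbi => hab hbi.symm, rfl⟩
      · rw [mem_singleton] at hib
        subst hib
        exact ⟨a, fun hai => hab hai, by rw [Finset.pair_comm]⟩
    refine ⟨k, mem_erase.2 ⟨hki, mem_univ _⟩, ?_⟩
    apply Subtype.ext
    funext j
    simp only [mkFace]
    by_cases hj : j = i ∨ j = k
    · have : j ∈ Finset.univ.filter fun m => x.1 m = none := by
        rw [hS, hSik]
        rcases hj with rfl | rfl
        · exact mem_insert_self _ _
        · exact mem_insert_of_mem (mem_singleton_self _)
      rw [if_pos hj, (mem_filter.1 this).2]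
    · rw [if_neg hj]
      cases hcase : x.1 j with
      | none =>
        have : j ∈ ({i, k} : Finset (Fin n)) := by
          rw [← hSik, ← hS]; exact mem_filter.2 ⟨mem_univ _, hcase⟩
        rcases mem_insert.1 this with rfl | hjk
        · exact absurd (Or.inl rfl) hj
        · exact absurd (Or.inr (mem_singleton.1 hjk)) hj
      | some c => rw [hxu j c hcase]

lemma bool_pigeonhole (a b c : Bool) : a = b ∨ a = c ∨ b = c := by revert a b c; decide

lemma bool_ne_iff' {a b : Bool} (h : a ≠ b) : a = !b := by revert a b; decide

lemma face_determined (x y : TwoFace n) {u v w : Fin n → Bool}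
    (huv : u ≠ v) (huw : u ≠ w) (hvw : v ≠ w)
    (hxu : inFace x.1 u) (hxv : inFace x.1 v) (hxw : inFace x.1 w)
    (hyu : inFace y.1 u) (hyv : inFace y.1 v) (hyw : inFace y.1 w) : x = y := by
  have key : ∀ (x y : TwoFace n), inFace x.1 u → inFace x.1 v → inFace x.1 w →
      inFace y.1 u → inFace y.1 v → inFace y.1 w →
      ∀ j b, x.1 j = some b → y.1 j = some b := by
    clear hxu hxv hxw hyu hyv hyw x y
    intro x y hxu hxv hxw hyu hyv hyw j b hjb
    cases hcase : y.1 j with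
    | some c =>
      have h1 := hxu j b hjb
      have h2 := hyu j c hcase
      rw [← h1, h2]
    | none =>
      exfalso
      obtain ⟨a1, a2, ha, hS⟩ := Finset.card_eq_two.1 y.2
      have hjS : j ∈ ({a1, a2} : Finset (Fin n)) := by
        rw [← hS]; exact mem_filter.2 ⟨mem_univ _, hcase⟩
      obtain ⟨k, hkj, hSjk⟩ : ∃ k, k ≠ j ∧ ({a1, a2} : Finset (Fin n)) = {j, k} := by
        rcases mem_insert.1 hjS with rfl | h2'
        · exact ⟨a2, fun h => ha h.symm, rfl⟩
        · rw [mem_singleton] at h2'; subst h2'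
          exact ⟨a1, fun h => ha h, by rw [Finset.pair_comm]⟩
      have same : ∀ t1 t2 : Fin n → Bool, inFace x.1 t1 → inFace x.1 t2 →
          inFace y.1 t1 → inFace y.1 t2 → t1 k = t2 k → t1 = t2 := by
        intro t1 t2 hx1 hx2 hy1 hy2 hk
        funext m
        by_cases hmj : m = j
        · subst hmj; rw [hx1 m b hjb, hx2 m b hjb]
        · by_cases hmk : m = k
          · subst hmk; exact hk
          · cases hcase2 : y.1 m with
            | some c => rw [hy1 m c hcase2, hy2 m c hcase2]
            | none =>
              exfalso
              have : m ∈ ({j, k} : Finset (Fin n)) := by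
                rw [← hSjk, ← hS]; exact mem_filter.2 ⟨mem_univ _, hcase2⟩
              rcases mem_insert.1 this with rfl | hmk'
              · exact hmj rfl
              · exact hmk (mem_singleton.1 hmk')
      rcases bool_pigeonhole (u k) (v k) (w k) with h | h | h
      · exact huv (same u v hxu hxv hyu hyv h)
      · exact huw (same u w hxu hxw hyu hyw h)
      · exact hvw (same v w hxv hxw hyv hyw h)
  apply Subtype.ext; funext j
  cases hcase : x.1 j with
  | some b => exact (key x y hxu hxv hxw hyu hyv hyw j b hcase).symm
  | none =>
    cases hcase2 : y.1 j with
    | none => rfl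
    | some c =>
      have := key y x hyu hyv hyw hxu hxv hxw j c hcase2
      rw [hcase] at this
      exact absurd this (by simp)

lemma efaces_inter_card {e f : Sym2 (Fin n → Bool)} (he : e ∈ (cubeGraph n).edgeFinset)
    (hf : f ∈ (cubeGraph n).edgeFinset) (hef : e ≠ f) :
    (efaces e ∩ efaces f).card ≤ 1 := by
  rw [Finset.card_le_one]
  induction e using Sym2.ind with | _ u v =>
  induction f using Sym2.ind with | _ w z =>
  rw [SimpleGraph.mem_edgeFinset, SimpleGraph.mem_edgeSet] at he hf
  have huv : u ≠ v := he.ne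
  have hwz : w ≠ z := hf.ne
  obtain ⟨t, htf, htu, htv⟩ : ∃ t, (t = w ∨ t = z) ∧ t ≠ u ∧ t ≠ v := by
    by_cases hw : w ≠ u ∧ w ≠ v
    · exact ⟨w, Or.inl rfl, hw.1, hw.2⟩
    · by_cases hz : z ≠ u ∧ z ≠ v
      · exact ⟨z, Or.inr rfl, hz.1, hz.2⟩
      · exfalso
        push_neg at hw hz
        apply hef
        rcases eq_or_ne w u with hwu | hwu
        · have hzv : z = v := by
            rcases eq_or_ne z u with hzu | hzu
            · exact absurd (hwu.trans hzu.symm) hwz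
            · exact hz hzu
          rw [hwu, hzv]
        · have hwv : w = v := hw hwu
          have hzu : z = u := by
            rcases eq_or_ne z u with hzu | hzu'
            · exact hzu
            · exact absurd (hwv.trans (hz hzu').symm) hwz
          rw [hwv, hzu, Sym2.eq_swap]
  intro x hx y hy
  have hxe := (mem_efaces.1 (Finset.mem_of_mem_inter_left hx))
  have hxf := (mem_efaces.1 (Finset.mem_of_mem_inter_right hx))
  have hye := (mem_efaces.1 (Finset.mem_of_mem_inter_left hy))
  have hyf := (mem_efaces.1 (Finset.mem_of_mem_inter_right hy))
  have hxt : inFace x.1 t := by rcases htf with rfl | rfl; exacts [hxf.1, hxf.2]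
  have hyt : inFace y.1 t := by rcases htf with rfl | rfl; exacts [hyf.1, hyf.2]
  exact face_determined x y huv (Ne.symm htu) (Ne.symm htv)
    hxe.1 hxe.2 hxt hye.1 hye.2 hyt

lemma card_faceEdges_le (x : TwoFace n) :
    ((cubeGraph n).edgeFinset.filter fun e => ∀ v ∈ e, inFace x.1 v).card ≤ 10 := by
  set V := univ.filter fun v => inFace x.1 v with hV
  have hVcard : V.card ≤ 4 := by
    obtain ⟨k1, k2, hk, hS⟩ := Finset.card_eq_two.1 x.2
    have hinj : ∀ v ∈ V, ∀ w ∈ V, (v k1, v k2) = (w k1, w k2) → v = w := by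
      intro v hv w hw hvw
      rw [Prod.mk.injEq] at hvw
      funext m
      by_cases hm1 : m = k1
      · subst hm1; exact hvw.1
      · by_cases hm2 : m = k2
        · subst hm2; exact hvw.2
        · cases hcase : x.1 m with
          | some c =>
            rw [(mem_filter.1 hv).2 m c hcase, (mem_filter.1 hw).2 m c hcase]
          | none =>
            exfalso
            have : m ∈ ({k1, k2} : Finset (Fin n)) := by
              rw [← hS]; exact mem_filter.2 ⟨mem_univ _, hcase⟩
            rcases mem_insert.1 this with rfl | hm
            · exact hm1 rfl
            · exact hm2 (mem_singleton.1 hm)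
    calc V.card ≤ (univ : Finset (Bool × Bool)).card :=
          Finset.card_le_card_of_injOn (fun v => (v k1, v k2)) (fun _ _ => mem_univ _) hinj
      _ = 4 := by simp
  have hsub : ((cubeGraph n).edgeFinset.filter fun e => ∀ v ∈ e, inFace x.1 v) ⊆ V.sym2 := by
    intro e he
    rw [Finset.mem_sym2_iff]
    intro y hy
    exact mem_filter.2 ⟨mem_univ _, (mem_filter.1 he).2 y hy⟩
  calc ((cubeGraph n).edgeFinset.filter fun e => ∀ v ∈ e, inFace x.1 v).card
      ≤ V.sym2.card := Finset.card_le_card hsub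
    _ = (V.card + 1).choose 2 := Finset.card_sym2 _
    _ ≤ (4 + 1).choose 2 := Nat.choose_le_choose 2 (by omega)
    _ = 10 := by decide

lemma cube_degree (v : Fin n → Bool) : (cubeGraph n).degree v = n := by
  have hb : ∀ b : Bool, b ≠ !b := by decide
  have key : (univ : Finset (Fin n)).card = ((cubeGraph n).neighborFinset v).card := by
    refine Finset.card_bij (fun i _ => Function.update v i (!v i)) ?_ ?_ ?_
    · intro i _
      rw [SimpleGraph.mem_neighborFinset]
      show (Finset.univ.filter fun j => v j ≠ Function.update v i (!v i) j).card = 1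
      have : (Finset.univ.filter fun j => v j ≠ Function.update v i (!v i) j) = {i} := by
        ext j
        simp only [mem_filter, mem_univ, true_and, mem_singleton]
        by_cases hj : j = i
        · subst hj; simp [Function.update_self, hb]
        · simp [Function.update_of_ne hj, hj]
      rw [this, card_singleton]
    · intro i _ i' _ heq
      by_contra hne
      have := congrFun heq i
      rw [Function.update_self, Function.update_of_ne (fun h => hne h) (!v i') v] at this
      exact hb (v i) this.symm
    · intro u hu
      rw [SimpleGraph.mem_neighborFinset] at hu
      obtain ⟨i, hi, hoff⟩ := adj_exists hu
      refine ⟨i, mem_univ _, ?_⟩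
      funext j
      by_cases hj : j = i
      · subst hj
        rw [Function.update_self]
        exact (bool_ne_iff' (fun h => hi h.symm)).symm
      · rw [Function.update_of_ne hj]
        exact hoff j hj
  rw [SimpleGraph.degree, ← key, card_univ, Fintype.card_fin]

lemma card_edges_mul_two : (cubeGraph n).edgeFinset.card * 2 = n * 2 ^ n := by
  have h := SimpleGraph.sum_degrees_eq_twice_card_edges (cubeGraph n)
  rw [Finset.sum_congr rfl fun v _ => cube_degree v, Finset.sum_const, card_univ] at h
  have hcard : Fintype.card (Fin n → Bool) = 2 ^ n := by
    simp [Fintype.card_fun]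
  rw [hcard, smul_eq_mul] at h
  rw [Nat.mul_comm, ← h, Nat.mul_comm]


lemma maximalCount_eq (ω : TwoFace n → Bool) :
    ((maximalCount n ω : ℝ)) = ∑ e ∈ (cubeGraph n).edgeFinset, ind (efaces e) ω := by
  have hpred : ∀ e : Sym2 (Fin n → Bool),
      (∀ x ∈ efaces e, ω x = false)
        ↔ (∀ x : TwoFace n, ω x = true → ¬ ∀ v, v ∈ e → inFace x.1 v) := by
    intro e
    constructor
    · intro h x hxt hC
      have : x ∈ efaces e := mem_filter.2 ⟨mem_univ _, hC⟩
      rw [h x this] at hxt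
      exact Bool.false_ne_true hxt
    · intro h x hx
      by_contra hne
      have hxt : ω x = true := by
        cases hh : ω x
        · exact absurd hh hne
        · rfl
      exact h x hxt (mem_filter.1 hx).2
  unfold maximalCount ind
  rw [Finset.sum_congr rfl fun e _ => if_congr (hpred e) rfl rfl, Finset.sum_boole]

lemma first_moment :
    ∑ ω : TwoFace n → Bool, faceProb n p ω * (maximalCount n ω : ℝ)
      = ∑ e ∈ (cubeGraph n).edgeFinset, (1 - p) ^ (efaces e).card := by
  calc ∑ ω : TwoFace n → Bool, faceProb n p ω * (maximalCount n ω : ℝ)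
      = ∑ ω : TwoFace n → Bool, ∑ e ∈ (cubeGraph n).edgeFinset,
          faceProb n p ω * ind (efaces e) ω := by
        refine Finset.sum_congr rfl fun ω _ => ?_
        rw [maximalCount_eq, Finset.mul_sum]
    _ = ∑ e ∈ (cubeGraph n).edgeFinset, ∑ ω : TwoFace n → Bool,
          faceProb n p ω * ind (efaces e) ω := Finset.sum_comm
    _ = ∑ e ∈ (cubeGraph n).edgeFinset, (1 - p) ^ (efaces e).card :=
        Finset.sum_congr rfl fun e _ => sum_faceProb_ind _

lemma second_moment :
    ∑ ω : TwoFace n → Bool, faceProb n p ω * (maximalCount n ω : ℝ) ^ 2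
      = ∑ e ∈ (cubeGraph n).edgeFinset, ∑ f ∈ (cubeGraph n).edgeFinset,
          (1 - p) ^ (efaces e ∪ efaces f).card := by
  calc ∑ ω : TwoFace n → Bool, faceProb n p ω * (maximalCount n ω : ℝ) ^ 2
      = ∑ ω : TwoFace n → Bool, ∑ e ∈ (cubeGraph n).edgeFinset,
          ∑ f ∈ (cubeGraph n).edgeFinset, faceProb n p ω * ind (efaces e ∪ efaces f) ω := by
        refine Finset.sum_congr rfl fun ω _ => ?_
        rw [pow_two, maximalCount_eq, Finset.sum_mul_sum, Finset.mul_sum]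
        refine Finset.sum_congr rfl fun e _ => ?_
        rw [Finset.mul_sum]
        refine Finset.sum_congr rfl fun f _ => ?_
        rw [← ind_mul_ind]
    _ = ∑ e ∈ (cubeGraph n).edgeFinset, ∑ f ∈ (cubeGraph n).edgeFinset,
          ∑ ω : TwoFace n → Bool, faceProb n p ω * ind (efaces e ∪ efaces f) ω := by
        rw [Finset.sum_comm]
        exact Finset.sum_congr rfl fun e _ => Finset.sum_comm
    _ = _ := Finset.sum_congr rfl fun e _ => Finset.sum_congr rfl fun f _ => sum_faceProb_ind _

lemma efaces_card_of_mem {e : Sym2 (Fin n → Bool)} (he : e ∈ (cubeGraph n).edgeFinset) :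
    (efaces e).card = n - 1 := by
  induction e using Sym2.ind with | _ u v =>
  rw [SimpleGraph.mem_edgeFinset, SimpleGraph.mem_edgeSet] at he
  exact efaces_card he

lemma variance_bound (hn : 2 ≤ n) (hp0 : 0 ≤ p) (hp : p ≤ 1 / 2) :
    (∑ e ∈ (cubeGraph n).edgeFinset, ∑ f ∈ (cubeGraph n).edgeFinset,
        (1 - p) ^ (efaces e ∪ efaces f).card)
      - (((cubeGraph n).edgeFinset.card : ℝ) * (1 - p) ^ (n - 1)) ^ 2
    ≤ ((cubeGraph n).edgeFinset.card : ℝ) * (1 - p) ^ (n - 1)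
      + 100 * 3 ^ n * (1 - p) ^ (2 * n - 3) := by
  classical
  set E := (cubeGraph n).edgeFinset with hE
  set q : ℝ := (1 - p) ^ (n - 1) with hq
  have h1p0 : (0:ℝ) ≤ 1 - p := by linarith
  have h1p1 : (1:ℝ) - p ≤ 1 := by linarith
  -- m^2 as a double sum
  have hm2 : ((E.card : ℝ) * q) ^ 2 = ∑ _e ∈ E, ∑ _f ∈ E, q * q := by
    rw [Finset.sum_const, Finset.sum_const, nsmul_eq_mul, nsmul_eq_mul]
    ring
  rw [hm2, ← Finset.sum_sub_distrib]
  rw [Finset.sum_congr rfl fun e _ => (Finset.sum_sub_distrib _ _).symm]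
  -- termwise bound
  have hterm : ∀ e ∈ E, ∀ f ∈ E,
      (1 - p) ^ (efaces e ∪ efaces f).card - q * q
        ≤ (if e = f then q else 0)
          + (if (efaces e ∩ efaces f).Nonempty ∧ e ≠ f then (1 - p) ^ (2 * n - 3) else 0) := by
    intro e he f hf
    by_cases hef : e = f
    · subst hef
      rw [if_pos rfl, Finset.union_self, efaces_card_of_mem he, ← hq]
      have : (0:ℝ) ≤ if (efaces e ∩ efaces e).Nonempty ∧ e ≠ e then (1 - p) ^ (2 * n - 3) else 0 := by
        split
        · positivity
        · exact le_refl 0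
      nlinarith [sq_nonneg q]
    · rw [if_neg hef]
      by_cases hne : (efaces e ∩ efaces f).Nonempty
      · rw [if_pos ⟨hne, hef⟩]
        have hcard : 2 * n - 3 ≤ (efaces e ∪ efaces f).card := by
          have h1 := Finset.card_union_add_card_inter (efaces e) (efaces f)
          have h2 := efaces_inter_card he hf hef
          rw [efaces_card_of_mem he, efaces_card_of_mem hf] at h1
          omega
        have := pow_le_pow_of_le_one h1p0 h1p1 hcard
        nlinarith [sq_nonneg q]
      · rw [if_neg (fun h => hne h.1)]
        rw [Finset.not_nonempty_iff_eq_empty, ← Finset.disjoint_iff_inter_eq_empty] at hne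
        rw [Finset.card_union_of_disjoint hne, efaces_card_of_mem he, efaces_card_of_mem hf]
        have heq2 : (1 - p) ^ (n - 1 + (n - 1)) = q * q := by rw [pow_add, hq]
        rw [heq2, sub_self]
        positivity
  refine le_trans (Finset.sum_le_sum fun e he => Finset.sum_le_sum (hterm e he)) ?_
  rw [Finset.sum_congr rfl fun e _ => Finset.sum_add_distrib, Finset.sum_add_distrib]
  have hdiag : ∑ e ∈ E, ∑ f ∈ E, (if e = f then q else 0) = (E.card : ℝ) * q := by
    rw [Finset.sum_congr rfl fun e he => Finset.sum_ite_eq E e fun _ => q]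
    rw [Finset.sum_congr rfl fun e he => if_pos he, Finset.sum_const, nsmul_eq_mul]
  have hoff : ∑ e ∈ E, ∑ f ∈ E,
      (if (efaces e ∩ efaces f).Nonempty ∧ e ≠ f then (1 - p) ^ (2 * n - 3) else 0)
      ≤ 100 * 3 ^ n * (1 - p) ^ (2 * n - 3) := by
    have hc : (0:ℝ) ≤ (1 - p) ^ (2 * n - 3) := pow_nonneg h1p0 _
    rw [← Finset.sum_product', ← Finset.sum_filter, Finset.sum_const, nsmul_eq_mul]
    have hsub : ((E ×ˢ E).filter fun r : Sym2 (Fin n → Bool) × Sym2 (Fin n → Bool) =>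
          (efaces r.1 ∩ efaces r.2).Nonempty ∧ r.1 ≠ r.2)
        ⊆ Finset.univ.biUnion fun x : TwoFace n =>
            (E.filter fun e => ∀ v ∈ e, inFace x.1 v)
              ×ˢ (E.filter fun e => ∀ v ∈ e, inFace x.1 v) := by
      intro r hr
      obtain ⟨hrE, hrcond⟩ := Finset.mem_filter.1 hr
      obtain ⟨x, hx⟩ := hrcond.1
      rw [Finset.mem_product] at hrE
      refine Finset.mem_biUnion.2 ⟨x, mem_univ _, ?_⟩
      rw [Finset.mem_product]
      constructor
      · exact Finset.mem_filter.2
          ⟨hrE.1, (Finset.mem_filter.1 (Finset.mem_of_mem_inter_left hx)).2⟩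
      · exact Finset.mem_filter.2
          ⟨hrE.2, (Finset.mem_filter.1 (Finset.mem_of_mem_inter_right hx)).2⟩
    have hcard : ((E ×ˢ E).filter fun r : Sym2 (Fin n → Bool) × Sym2 (Fin n → Bool) =>
          (efaces r.1 ∩ efaces r.2).Nonempty ∧ r.1 ≠ r.2).card ≤ 100 * 3 ^ n := by
      refine le_trans (Finset.card_le_card hsub) (le_trans Finset.card_biUnion_le ?_)
      have hTF : Fintype.card (TwoFace n) ≤ 3 ^ n := by
        refine le_trans (Fintype.card_subtype_le _) ?_
        rw [Fintype.card_fun]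
        simp
      calc ∑ x : TwoFace n,
            ((E.filter fun e => ∀ v ∈ e, inFace x.1 v)
              ×ˢ (E.filter fun e => ∀ v ∈ e, inFace x.1 v)).card
          ≤ ∑ _x : TwoFace n, 100 := by
            refine Finset.sum_le_sum fun x _ => ?_
            rw [Finset.card_product]
            calc (E.filter fun e => ∀ v ∈ e, inFace x.1 v).card
                  * (E.filter fun e => ∀ v ∈ e, inFace x.1 v).card
                ≤ 10 * 10 := Nat.mul_le_mul (card_faceEdges_le x) (card_faceEdges_le x)
              _ = 100 := rfl
        _ = Fintype.card (TwoFace n) * 100 := by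
            rw [Finset.sum_const, smul_eq_mul, Finset.card_univ]
        _ ≤ 3 ^ n * 100 := Nat.mul_le_mul_right _ hTF
        _ ≤ 100 * 3 ^ n := by omega
    calc (((E ×ˢ E).filter fun r : Sym2 (Fin n → Bool) × Sym2 (Fin n → Bool) =>
          (efaces r.1 ∩ efaces r.2).Nonempty ∧ r.1 ≠ r.2).card : ℝ) * (1 - p) ^ (2 * n - 3)
        ≤ ((100 * 3 ^ n : ℕ) : ℝ) * (1 - p) ^ (2 * n - 3) := by
          exact mul_le_mul_of_nonneg_right (by exact_mod_cast hcard) hc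
      _ = 100 * 3 ^ n * (1 - p) ^ (2 * n - 3) := by push_cast; ring
  rw [hdiag]
  linarith


set_option maxHeartbeats 2000000 in
lemma prob_bound (hn : 2 ≤ n) (hp0 : 0 ≤ p) (hp : p ≤ 1 / 2) :
    ∑ ω ∈ Finset.univ.filter fun ω : TwoFace n → Bool => ¬ 2 ≤ maximalCount n ω,
      faceProb n p ω
    ≤ 4 / n + 800 * (3 / 4 : ℝ) ^ n := by
  classical
  obtain ⟨a, rfl⟩ : ∃ a, n = a + 2 := ⟨n - 2, by omega⟩
  have hp1 : p ≤ 1 := by linarith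
  have h1p : (1/2 : ℝ) ≤ 1 - p := by linarith
  have h1p0 : (0:ℝ) < 1 - p := by linarith
  have hμ : ∀ ω : TwoFace (a+2) → Bool, 0 ≤ faceProb (a+2) p ω :=
    faceProb_nonneg hp0 hp1
  set E := (cubeGraph (a+2)).edgeFinset with hEdef
  set q : ℝ := (1 - p) ^ (a + 1) with hqdef
  set N : ℝ := (E.card : ℝ) with hNdef
  have hNn : N * 2 = ((a:ℝ) + 2) * 2 ^ (a + 2) := by
    have h := card_edges_mul_two (n := a + 2)
    rw [hNdef, ← hEdef] at *
    exact_mod_cast h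
  have hq_lb : ((1:ℝ)/2) ^ (a+1) ≤ q := pow_le_pow_left₀ (by norm_num) h1p _
  have hq_pos : 0 < q := pow_pos h1p0 _
  have hhalf : (2:ℝ) ^ (a+1) * (1/2) ^ (a+1) = 1 := by
    rw [← mul_pow]; norm_num
  have h2succ : (2:ℝ) ^ (a+2) = 2 ^ (a+1) * 2 := pow_succ 2 (a+1)
  have hNval : N = ((a:ℝ) + 2) * 2 ^ (a + 1) := by nlinarith [hNn, h2succ]
  have hm_lb : ((a:ℝ) + 2) ≤ N * q := by
    have h1 : ((a:ℝ)+2) = N * (1/2)^(a+1) := by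
      rw [hNval, mul_assoc, hhalf, mul_one]
    rw [h1]
    have hN0 : (0:ℝ) ≤ N := Nat.cast_nonneg _
    exact mul_le_mul_of_nonneg_left hq_lb hN0
  have ha0 : (0:ℝ) ≤ (a:ℝ) := Nat.cast_nonneg _
  have hm2 : (2:ℝ) ≤ N * q := by linarith
  -- first moment value
  have hM1 : ∑ e ∈ E, (1-p) ^ ((efaces e).card) = N * q := by
    rw [Finset.sum_congr rfl fun e he => by
      rw [efaces_card_of_mem he, show a+2-1 = a+1 from by omega]]
    rw [Finset.sum_const, nsmul_eq_mul, hqdef]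
  -- Chebyshev step
  have hstep1 : (∑ ω ∈ Finset.univ.filter fun ω : TwoFace (a+2) → Bool =>
        ¬ 2 ≤ maximalCount (a+2) ω, faceProb (a+2) p ω) * (N*q - 1)^2
      ≤ ∑ ω : TwoFace (a+2) → Bool,
          faceProb (a+2) p ω * ((maximalCount (a+2) ω : ℝ) - N*q)^2 := by
    rw [Finset.sum_mul]
    refine le_trans (Finset.sum_le_sum ?_)
      (Finset.sum_le_sum_of_subset_of_nonneg (Finset.filter_subset _ _) ?_)
    · intro ω hω
      have hle : maximalCount (a+2) ω ≤ 1 := by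
        have := (Finset.mem_filter.1 hω).2
        omega
      have hX : (maximalCount (a+2) ω : ℝ) ≤ 1 := by exact_mod_cast hle
      have hXnn : (0:ℝ) ≤ (maximalCount (a+2) ω : ℝ) := Nat.cast_nonneg _
      have h1 : (0:ℝ) ≤ N*q - 1 := by linarith
      have h2 : N*q - 1 ≤ N*q - (maximalCount (a+2) ω : ℝ) := by linarith
      have h3 : (N*q - 1)^2 ≤ ((maximalCount (a+2) ω : ℝ) - N*q)^2 := by
        have := pow_le_pow_left₀ h1 h2 2
        calc (N*q-1)^2 ≤ (N*q - (maximalCount (a+2) ω : ℝ))^2 := this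
          _ = ((maximalCount (a+2) ω : ℝ) - N*q)^2 := by ring
      exact mul_le_mul_of_nonneg_left h3 (hμ ω)
    · intro ω _ _
      exact mul_nonneg (hμ ω) (sq_nonneg _)
  have hexpand : ∑ ω : TwoFace (a+2) → Bool,
        faceProb (a+2) p ω * ((maximalCount (a+2) ω : ℝ) - N*q)^2
      = (∑ e ∈ E, ∑ f ∈ E, (1-p) ^ ((efaces e ∪ efaces f).card)) - (N*q)^2 := by
    have hpt : ∀ ω : TwoFace (a+2) → Bool,
        faceProb (a+2) p ω * ((maximalCount (a+2) ω : ℝ) - N*q)^2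
          = faceProb (a+2) p ω * (maximalCount (a+2) ω : ℝ)^2
            - 2*(N*q)*(faceProb (a+2) p ω * (maximalCount (a+2) ω : ℝ))
            + (N*q)^2 * faceProb (a+2) p ω := by
      intro ω; ring
    rw [Finset.sum_congr rfl fun ω _ => hpt ω, Finset.sum_add_distrib,
      Finset.sum_sub_distrib, ← Finset.mul_sum, ← Finset.mul_sum,
      second_moment, first_moment, sum_faceProb, hM1]
    rw [hEdef]
    ring
  have hvar := variance_bound (n := a+2) (by omega) hp0 hp
  rw [show a+2-1 = a+1 from by omega, show 2*(a+2)-3 = 2*a+1 from by omega] at hvar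
  set B := ∑ ω ∈ Finset.univ.filter fun ω : TwoFace (a+2) → Bool =>
      ¬ 2 ≤ maximalCount (a+2) ω, faceProb (a+2) p ω with hBdef
  have hcheb : B * (N*q - 1)^2 ≤ N*q + 100 * 3^(a+2) * (1-p)^(2*a+1) := by
    calc B * (N*q - 1)^2 ≤ _ := hstep1
      _ = _ := hexpand
      _ ≤ N*q + 100 * 3^(a+2) * (1-p)^(2*a+1) := by
        have := hvar
        rw [← hEdef, ← hNdef, ← hqdef] at this
        linarith
  set m : ℝ := N * q with hmdef
  have hden : (0:ℝ) < (m - 1)^2 := pow_pos (by linarith) 2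
  have hc0 : (0:ℝ) ≤ 100 * 3^(a+2) * (1-p)^(2*a+1) := by positivity
  have hB_le : B ≤ (m + 100 * 3^(a+2) * (1-p)^(2*a+1)) / (m-1)^2 := by
    rw [le_div_iff₀ hden]; exact hcheb
  have hcast : ((a:ℝ) + 2) = ((a + 2 : ℕ) : ℝ) := by push_cast; ring
  refine le_trans hB_le ?_
  rw [add_div]
  have hm0 : (0:ℝ) < m := by linarith
  have hmq : m^2/4 ≤ (m-1)^2 := by nlinarith
  have hA : m/(m-1)^2 ≤ 4 / ((a+2:ℕ):ℝ) := by
    rw [div_le_div_iff₀ hden (by rw [← hcast]; linarith), ← hcast]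
    have k1 : (0:ℝ) ≤ (m - ((a:ℝ)+2)) * m := mul_nonneg (by linarith) (by linarith)
    have k2 : (0:ℝ) ≤ (3*m - 2)*(m - 2) := mul_nonneg (by linarith) (by linarith)
    nlinarith [k1, k2]
  have hq2 : q^2 = (1-p)^(2*a+1) * (1-p) := by
    rw [hqdef, ← pow_mul, show (a+1)*2 = 2*a+1+1 from by omega, pow_succ]
  have hppos : (0:ℝ) < (1-p)^(2*a+1) := pow_pos h1p0 _
  have hNlb : (2:ℝ)^(a+2) ≤ N := by
    rw [hNval, h2succ]
    nlinarith [pow_pos (show (0:ℝ) < 2 by norm_num) (a+1)]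
  have hNpos : (0:ℝ) < N := lt_of_lt_of_le (pow_pos (by norm_num) _) hNlb
  have hBpart : (100 * 3^(a+2) * (1-p)^(2*a+1))/(m-1)^2 ≤ 800 * (3/4:ℝ)^(a+2) := by
    have step1 : (100 * 3^(a+2) * (1-p)^(2*a+1))/(m-1)^2
        ≤ (100 * 3^(a+2) * (1-p)^(2*a+1))/(m^2/4) := by
      gcongr
    refine le_trans step1 ?_
    have hmsq : m^2 = N^2 * ((1-p)^(2*a+1) * (1-p)) := by
      rw [hmdef, mul_pow, hq2]
    rw [hmsq, div_le_iff₀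
      (div_pos (mul_pos (pow_pos hNpos 2) (mul_pos hppos h1p0)) (by norm_num))]
    have h4N : (4:ℝ)^(a+2) ≤ N^2 := by
      have h24 : (2:ℝ)^(a+2) * 2^(a+2) = 4^(a+2) := by rw [← mul_pow]; norm_num
      nlinarith [pow_pos (show (0:ℝ) < 2 by norm_num) (a+2)]
    have hXY : (4:ℝ)^(a+2) * ((1-p)^(2*a+1) * (1/2)) ≤ N^2*((1-p)^(2*a+1)*(1-p)) := by
      have hx1 : (1-p)^(2*a+1) * (1/2) ≤ (1-p)^(2*a+1)*(1-p) :=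
        mul_le_mul_of_nonneg_left h1p hppos.le
      have hx2 : (0:ℝ) ≤ (1-p)^(2*a+1) * (1/2) := by positivity
      exact mul_le_mul h4N hx1 hx2 (sq_nonneg N)
    have hG : (4:ℝ)^(a+2) * (3/4)^(a+2) = 3^(a+2) := by rw [← mul_pow]; norm_num
    have h200G : (0:ℝ) ≤ 200 * (3/4:ℝ)^(a+2) := by positivity
    have hmul := mul_le_mul_of_nonneg_left hXY h200G
    have hid : 100*(3:ℝ)^(a+2)*(1-p)^(2*a+1)
        = 200 * (3/4:ℝ)^(a+2) * ((4:ℝ)^(a+2) * ((1-p)^(2*a+1) * (1/2))) := by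
      rw [← hG]; ring
    rw [hid]
    calc 200 * (3/4:ℝ)^(a+2) * ((4:ℝ)^(a+2) * ((1-p)^(2*a+1) * (1/2)))
        ≤ 200 * (3/4:ℝ)^(a+2) * (N^2*((1-p)^(2*a+1)*(1-p))) := hmul
      _ = 800 * (3/4:ℝ)^(a+2) * (N^2 * ((1-p)^(2*a+1) * (1-p)) / 4) := by ring
  exact add_le_add hA hBpart


end Q2

/-- For fixed `p ≤ 1/2`, with probability tending to `1` as `n → ∞`, the random cubical
complex `Q_2(n,p)` contains at least two maximal 1-faces. -/
theorem at_least_two_maximal_edges_whp (p : ℝ) (hp0 : 0 ≤ p) (hp : p ≤ 1 / 2) :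
    Filter.Tendsto
      (fun n : ℕ =>
        ∑ ω ∈ Finset.univ.filter fun ω : TwoFace n → Bool => 2 ≤ maximalCount n ω,
          faceProb n p ω)
      Filter.atTop (nhds 1) := by
  have hp1 : p ≤ 1 := by linarith
  have hsplit : ∀ n : ℕ,
      (∑ ω ∈ Finset.univ.filter fun ω : TwoFace n → Bool => 2 ≤ maximalCount n ω,
        faceProb n p ω)
      = 1 - ∑ ω ∈ Finset.univ.filter fun ω : TwoFace n → Bool => ¬ 2 ≤ maximalCount n ω,
          faceProb n p ω := by
    intro n
    have h := Finset.sum_filter_add_sum_filter_not Finset.univ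
      (fun ω : TwoFace n → Bool => 2 ≤ maximalCount n ω) (faceProb n p)
    rw [Q2.sum_faceProb n p] at h
    linarith
  have hB0 : ∀ n : ℕ, 0 ≤ ∑ ω ∈ Finset.univ.filter
      fun ω : TwoFace n → Bool => ¬ 2 ≤ maximalCount n ω, faceProb n p ω :=
    fun n => Finset.sum_nonneg fun ω _ => Q2.faceProb_nonneg hp0 hp1 ω
  have hBtend : Filter.Tendsto (fun n : ℕ => ∑ ω ∈ Finset.univ.filter
      fun ω : TwoFace n → Bool => ¬ 2 ≤ maximalCount n ω, faceProb n p ω)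
      Filter.atTop (nhds 0) := by
    refine squeeze_zero' (g := fun n : ℕ => 4 / (n:ℝ) + 800 * (3/4:ℝ)^n)
      (Filter.Eventually.of_forall hB0) ?_ ?_
    · filter_upwards [Filter.eventually_ge_atTop 2] with n hn
      exact Q2.prob_bound hn hp0 hp
    · have h1 : Filter.Tendsto (fun n : ℕ => 4 / (n:ℝ)) Filter.atTop (nhds 0) :=
        tendsto_const_div_atTop_nhds_zero_nat 4
      have h2 : Filter.Tendsto (fun n : ℕ => 800 * (3/4:ℝ)^n) Filter.atTop (nhds 0) := by
        have h3 := tendsto_pow_atTop_nhds_zero_of_lt_one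
          (by norm_num : (0:ℝ) ≤ 3/4) (by norm_num : (3/4:ℝ) < 1)
        simpa using h3.const_mul (800:ℝ)
      simpa using h1.add h2
  have hfin := Filter.Tendsto.sub
    (tendsto_const_nhds : Filter.Tendsto (fun _ : ℕ => (1:ℝ)) Filter.atTop (nhds 1)) hBtend
  rw [sub_zero] at hfin
  exact hfin.congr fun n => (hsplit n).symm
end

section
/- For any fixed p ∈ (0,1) there exist a natural number T_p and constants δ, ε > 0 such that for all sufficiently large n, Σ_{s=T_p}^{⌊2^{εn}⌋} g(s) < 2^{−δn}, where g(s) = Σ_{S connected, |S|=s} (1-p)^{b(S)} over connected vertex subsets of the hypercube graph Q^n_1. -/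
open Finset

/-- The edge boundary `b(S)` of a set `S` of vertices of the hypercube: the number of
edges `(u,v)` of `Q^n_1` with `u ∈ S` and `v ∉ S`. -/
def edgeBoundary (n : ℕ) (S : Finset (Fin n → Bool)) : ℕ :=
  ((S ×ˢ Sᶜ).filter fun uv => (cubeGraph n).Adj uv.1 uv.2).card

open scoped Classical in
/-- `g(s) = Σ_S (1-p)^{b(S)}`, the sum over connected vertex subsets `S` of size `s` of
the hypercube graph `Q^n_1`, where `b(S)` is the edge boundary of `S`. -/
noncomputable def g (n : ℕ) (p : ℝ) (s : ℕ) : ℝ :=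
  ∑ S ∈ Finset.univ.filter fun S : Finset (Fin n → Bool) =>
      S.card = s ∧ ((cubeGraph n).induce (S : Set (Fin n → Bool))).Connected,
    (1 - p) ^ edgeBoundary n S

namespace CubeAux

abbrev V (n : ℕ) := Fin n → Bool

variable {n : ℕ}

def flipV (n : ℕ) (k : Fin n) (u : V n) : V n := Function.update u k (!u k)

lemma adj_iff {u w : V n} :
    (cubeGraph n).Adj u w ↔ (univ.filter fun i => u i ≠ w i).card = 1 := Iff.rfl

lemma flipV_apply (k i : Fin n) (u : V n) :
    flipV n k u i = if i = k then !u k else u i := by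
  by_cases h : i = k <;> simp [flipV, Function.update, h]

lemma adj_flipV (k : Fin n) (u : V n) : (cubeGraph n).Adj u (flipV n k u) := by
  rw [adj_iff]
  have : (univ.filter fun i => u i ≠ flipV n k u i) = {k} := by
    ext i
    simp only [mem_filter, mem_univ, true_and, mem_singleton, flipV_apply]
    by_cases h : i = k <;> simp [h]
  rw [this, card_singleton]

lemma eq_flip_of_adj {u w : V n} (h : (cubeGraph n).Adj u w) : ∃ k, w = flipV n k u := by
  rw [adj_iff, Finset.card_eq_one] at h
  obtain ⟨k, hk⟩ := h
  have hmem : ∀ i, u i ≠ w i ↔ i = k := by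
    intro i
    constructor
    · intro hi
      have : i ∈ univ.filter fun i => u i ≠ w i := by simp [hi]
      rw [hk] at this; simpa using this
    · rintro rfl
      have : i ∈ univ.filter fun i => u i ≠ w i := by rw [hk]; simp
      simpa using this
  refine ⟨k, funext fun i => ?_⟩
  rw [flipV_apply]
  by_cases h : i = k
  · subst h
    have h2 : u i ≠ w i := (hmem i).mpr rfl
    simp only [if_pos rfl]
    cases hu : u i <;> cases hw : w i <;> simp_all
  · have : u i = w i := by
      by_contra hc; exact h ((hmem i).mp hc)
    simp [h, this.symm]

-- deg
lemma degree_count (u : V n) : (univ.filter fun w => (cubeGraph n).Adj u w).card = n := by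
  have := Finset.card_bij (s := (univ : Finset (Fin n)))
    (t := univ.filter fun w => (cubeGraph n).Adj u w)
    (fun k _ => flipV n k u)
    (fun k _ => by simp [adj_flipV])
    (fun k _ k' _ hkk => by
      by_contra hne
      have h2 : flipV n k u = flipV n k' u := hkk
      have := congrFun h2 k
      rw [flipV_apply, flipV_apply, if_pos rfl, if_neg hne] at this
      cases hu : u k <;> simp [hu] at this)
    (fun w hw => by
      obtain ⟨k, hk⟩ := eq_flip_of_adj (by simpa using hw)
      exact ⟨k, mem_univ k, hk.symm⟩)
  simpa using this.symm



def Edeg (n : ℕ) (S : Finset (V n)) : ℕ :=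
  ((S ×ˢ S).filter fun uv => (cubeGraph n).Adj uv.1 uv.2).card

lemma card_filter_prod (S T : Finset (V n)) :
    ((S ×ˢ T).filter fun uv => (cubeGraph n).Adj uv.1 uv.2).card
      = ∑ u ∈ S, (T.filter fun w => (cubeGraph n).Adj u w).card := by
  rw [Finset.card_filter, Finset.sum_product]
  exact Finset.sum_congr rfl fun u _ => (Finset.card_filter _ _).symm

lemma boundary_add_Edeg (S : Finset (V n)) :
    edgeBoundary n S + Edeg n S = n * S.card := by
  rw [edgeBoundary, Edeg, card_filter_prod, card_filter_prod, ← Finset.sum_add_distrib]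
  have h : ∀ u : V n, (Sᶜ.filter fun w => (cubeGraph n).Adj u w).card
      + (S.filter fun w => (cubeGraph n).Adj u w).card = n := by
    intro u
    have hu : (Sᶜ.filter fun w => (cubeGraph n).Adj u w) ∪ (S.filter fun w => (cubeGraph n).Adj u w)
        = univ.filter fun w => (cubeGraph n).Adj u w := by
      have hcu : Sᶜ ∪ S = univ := by ext x; by_cases hx : x ∈ S <;> simp [hx]
      rw [← Finset.filter_union, hcu]
    have hd : Disjoint (Sᶜ.filter fun w => (cubeGraph n).Adj u w)
        (S.filter fun w => (cubeGraph n).Adj u w) :=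
      Finset.disjoint_filter_filter (disjoint_compl_left)
    rw [← Finset.card_union_of_disjoint hd, hu, degree_count]
  rw [Finset.sum_congr rfl fun u _ => h u, Finset.sum_const, smul_eq_mul, mul_comm]

lemma Edeg_eq_sum (S : Finset (V n)) :
    Edeg n S = ∑ u ∈ S, ∑ w ∈ S, if (cubeGraph n).Adj u w then 1 else 0 := by
  rw [Edeg, Finset.card_filter, Finset.sum_product]

lemma adj_succ_iff {u w : V (n+1)} :
    (cubeGraph (n+1)).Adj u w ↔
      ((u 0 = w 0 ∧ (cubeGraph n).Adj (Fin.tail u) (Fin.tail w)) ∨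
       (¬ u 0 = w 0 ∧ Fin.tail u = Fin.tail w)) := by
  have e1 : ∀ m (x y : V m),
      (cubeGraph m).Adj x y ↔ (∑ i : Fin m, if x i ≠ y i then 1 else 0) = 1 := by
    intro m x y; rw [adj_iff, Finset.card_filter]
  rw [e1, e1, Fin.sum_univ_succ]
  have e2 : (∑ i : Fin n, if u i.succ ≠ w i.succ then 1 else 0)
      = ∑ i : Fin n, if Fin.tail u i ≠ Fin.tail w i then 1 else 0 := rfl
  have e3 : Fin.tail u = Fin.tail w ↔
      (∑ i : Fin n, if Fin.tail u i ≠ Fin.tail w i then 1 else 0) = 0 := by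
    rw [Finset.sum_eq_zero_iff]
    constructor
    · intro h i _
      rw [if_neg]; rw [h]; simp
    · intro h
      funext i
      have := h i (mem_univ i)
      by_contra hc
      rw [if_pos hc] at this
      exact one_ne_zero this
  rw [e2]
  by_cases h0 : u 0 = w 0
  · have : (if u 0 ≠ w 0 then 1 else 0) = 0 := by simp [h0]
    rw [this, zero_add]
    simp [h0]
  · have : (if u 0 ≠ w 0 then 1 else 0) = 1 := by simp [h0]
    rw [this, e3]
    constructor
    · intro h; exact Or.inr ⟨h0, by omega⟩
    · rintro (⟨hc, _⟩ | ⟨_, hs⟩)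
      · exact absurd hc h0
      · omega

lemma log_key (a b : ℕ) :
    a * Nat.log 2 a + b * Nat.log 2 b + min a b ≤ (a + b) * Nat.log 2 (a + b) := by
  wlog hab : a ≤ b with H
  · have := H b a (le_of_not_ge hab)
    rw [min_comm, add_comm b a] at this
    omega
  rcases Nat.eq_zero_or_pos a with rfl | ha
  · simp
  · have h1 : Nat.log 2 a + 1 ≤ Nat.log 2 (a + b) := by
      calc Nat.log 2 a + 1 = Nat.log 2 (a * 2) := (Nat.log_mul_base (by norm_num) ha.ne').symm
        _ ≤ Nat.log 2 (a + b) := Nat.log_mono_right (by omega)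
    have h2 : Nat.log 2 b ≤ Nat.log 2 (a + b) := Nat.log_mono_right (by omega)
    have e1 : a * (Nat.log 2 a + 1) ≤ a * Nat.log 2 (a + b) := Nat.mul_le_mul_left a h1
    have e2 : b * Nat.log 2 b ≤ b * Nat.log 2 (a + b) := Nat.mul_le_mul_left b h2
    have hmin : min a b = a := min_eq_left hab
    have hsum : (a + b) * Nat.log 2 (a + b)
        = a * Nat.log 2 (a + b) + b * Nat.log 2 (a + b) := by ring
    have hlhs : a * Nat.log 2 a + b * Nat.log 2 b + min a b
        = a * (Nat.log 2 a + 1) + b * Nat.log 2 b := by rw [hmin]; ring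
    rw [hlhs, hsum]
    exact Nat.add_le_add e1 e2

lemma injOn_tail (p : V (n+1) → Prop) [DecidablePred p] (hp : ∀ u v, p u → p v → u 0 = v 0)
    (S : Finset (V (n+1))) :
    ∀ x ∈ S.filter p, ∀ y ∈ S.filter p, Fin.tail x = Fin.tail y → x = y := by
  intro x hx y hy hxy
  rw [Finset.mem_filter] at hx hy
  have h0 : x 0 = y 0 := hp x y hx.2 hy.2
  have : Fin.cons (x 0) (Fin.tail x) = Fin.cons (y 0) (Fin.tail y) := by rw [h0, hxy]
  rwa [Fin.cons_self_tail, Fin.cons_self_tail] at this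

lemma Edeg_le : ∀ (n : ℕ) (S : Finset (V n)), Edeg n S ≤ 2 * S.card * Nat.log 2 S.card := by
  intro n
  induction n with
  | zero =>
    intro S
    have h0 : Edeg 0 S = 0 := by
      rw [Edeg, Finset.card_eq_zero, Finset.filter_eq_empty_iff]
      intro uv _
      rw [adj_iff]
      have : (univ.filter fun i => uv.1 i ≠ uv.2 i) = ∅ := Finset.eq_empty_of_isEmpty _
      rw [this]
      simp
    rw [h0]; exact Nat.zero_le _
  | succ n IH =>
    intro S
    set Ft := S.filter (fun u => u 0 = true) with hFt
    set Ff := S.filter (fun u => ¬ u 0 = true) with hFf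
    set A := Ft.image Fin.tail with hA
    set B := Ff.image Fin.tail with hB
    have hinjT := injOn_tail (fun u => u 0 = true) (fun u v hu hv => by rw [hu, hv]) S
    have hinjF := injOn_tail (fun u => ¬ u 0 = true) (fun u v hu hv => by
      simp only [Bool.not_eq_true] at hu hv; rw [hu, hv]) S
    have hcardA : A.card = Ft.card := Finset.card_image_of_injOn fun x hx y hy => hinjT x hx y hy
    have hcardB : B.card = Ff.card := Finset.card_image_of_injOn fun x hx y hy => hinjF x hx y hy
    have hcardS : S.card = A.card + B.card := by
      rw [hcardA, hcardB]
      exact (Finset.card_filter_add_card_filter_not (s := S) (p := fun u => u 0 = true)).symm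
    -- decompose the double sum
    have hsplit : Edeg (n+1) S
        = (∑ u ∈ Ft, ∑ w ∈ Ft, if (cubeGraph (n+1)).Adj u w then 1 else 0)
        + (∑ u ∈ Ft, ∑ w ∈ Ff, if (cubeGraph (n+1)).Adj u w then 1 else 0)
        + ((∑ u ∈ Ff, ∑ w ∈ Ft, if (cubeGraph (n+1)).Adj u w then 1 else 0)
        + (∑ u ∈ Ff, ∑ w ∈ Ff, if (cubeGraph (n+1)).Adj u w then 1 else 0)) := by
      rw [Edeg_eq_sum]
      rw [← Finset.sum_filter_add_sum_filter_not S (fun u => u 0 = true)]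
      congr 1
      · rw [Finset.sum_congr rfl fun u _ =>
          (Finset.sum_filter_add_sum_filter_not S (fun w => w 0 = true) _).symm]
        rw [Finset.sum_add_distrib]
      · rw [Finset.sum_congr rfl fun u _ =>
          (Finset.sum_filter_add_sum_filter_not S (fun w => w 0 = true) _).symm]
        rw [Finset.sum_add_distrib]
    have hadj_diag : ∀ (u w : V (n+1)), u 0 = w 0 →
        ((cubeGraph (n+1)).Adj u w ↔ (cubeGraph n).Adj (Fin.tail u) (Fin.tail w)) := by
      intro u w h0
      rw [adj_succ_iff]
      constructor
      · rintro (⟨_, h⟩ | ⟨hc, _⟩)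
        · exact h
        · exact absurd h0 hc
      · intro h; exact Or.inl ⟨h0, h⟩
    have diagKey : ∀ (F : Finset (V (n+1))), (∀ u ∈ F, ∀ w ∈ F, u 0 = w 0) →
        (∀ x ∈ F, ∀ y ∈ F, Fin.tail x = Fin.tail y → x = y) →
        (∑ u ∈ F, ∑ w ∈ F, if (cubeGraph (n+1)).Adj u w then 1 else 0)
          = Edeg n (F.image Fin.tail) := by
      intro F hb hinj
      rw [Edeg_eq_sum, Finset.sum_image hinj]
      refine Finset.sum_congr rfl fun u hu => ?_
      rw [Finset.sum_image hinj]
      refine Finset.sum_congr rfl fun w hw => ?_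
      exact if_congr (hadj_diag u w (hb u hu w hw)) rfl rfl
    have crossKey : ∀ (F G : Finset (V (n+1))), (∀ u ∈ F, ∀ w ∈ G, ¬ u 0 = w 0) →
        (∀ x ∈ F, ∀ y ∈ F, Fin.tail x = Fin.tail y → x = y) →
        (∀ x ∈ G, ∀ y ∈ G, Fin.tail x = Fin.tail y → x = y) →
        (∑ u ∈ F, ∑ w ∈ G, if (cubeGraph (n+1)).Adj u w then 1 else 0)
          ≤ (F.image Fin.tail ∩ G.image Fin.tail).card := by
      intro F G hne hiF hiG
      have heq : (∑ u ∈ F, ∑ w ∈ G, if (cubeGraph (n+1)).Adj u w then 1 else 0)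
          = ((F ×ˢ G).filter fun uv => Fin.tail uv.1 = Fin.tail uv.2).card := by
        rw [Finset.card_filter, Finset.sum_product]
        refine Finset.sum_congr rfl fun u hu => Finset.sum_congr rfl fun w hw => ?_
        refine if_congr ?_ rfl rfl
        rw [adj_succ_iff]
        constructor
        · rintro (⟨hc, _⟩ | ⟨_, h⟩)
          · exact absurd hc (hne u hu w hw)
          · exact h
        · intro h; exact Or.inr ⟨hne u hu w hw, h⟩
      rw [heq]
      apply Finset.card_le_card_of_injOn (fun uv : (V (n+1)) × (V (n+1)) => Fin.tail uv.1)
      · intro uv huv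
        rw [Finset.mem_coe, Finset.mem_filter, Finset.mem_product] at huv
        obtain ⟨⟨h1, h2⟩, h3⟩ := huv
        exact Finset.mem_inter.mpr ⟨Finset.mem_image_of_mem _ h1,
          by show Fin.tail uv.1 ∈ _; rw [h3]; exact Finset.mem_image_of_mem _ h2⟩
      · intro uv huv uv' huv' hteq
        simp only [Finset.coe_filter, Set.mem_setOf_eq, Finset.mem_product] at huv huv'
        obtain ⟨⟨h1, h2⟩, h3⟩ := huv
        obtain ⟨⟨h1', h2'⟩, h3'⟩ := huv'
        have hteq' : Fin.tail uv.1 = Fin.tail uv'.1 := hteq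
        have e1 : uv.1 = uv'.1 := hiF _ h1 _ h1' hteq'
        have e2 : uv.2 = uv'.2 := hiG _ h2 _ h2' (by rw [← h3, ← h3', hteq'])
        exact Prod.ext e1 e2
    have hbT : ∀ u ∈ Ft, ∀ w ∈ Ft, u 0 = w 0 := by
      intro u hu w hw
      rw [Finset.mem_filter] at hu hw
      rw [hu.2, hw.2]
    have hbF : ∀ u ∈ Ff, ∀ w ∈ Ff, u 0 = w 0 := by
      intro u hu w hw
      rw [Finset.mem_filter] at hu hw
      simp only [Bool.not_eq_true] at hu hw
      rw [hu.2, hw.2]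
    have hneTF : ∀ u ∈ Ft, ∀ w ∈ Ff, ¬ u 0 = w 0 := by
      intro u hu w hw
      rw [Finset.mem_filter] at hu hw
      simp only [Bool.not_eq_true] at hw
      rw [hu.2, hw.2]; simp
    have hneFT : ∀ u ∈ Ff, ∀ w ∈ Ft, ¬ u 0 = w 0 := by
      intro u hu w hw
      rw [Finset.mem_filter] at hu hw
      simp only [Bool.not_eq_true] at hu
      rw [hu.2, hw.2]; simp
    have hDtt := diagKey Ft hbT hinjT
    have hDff := diagKey Ff hbF hinjF
    have hDtf := crossKey Ft Ff hneTF hinjT hinjF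
    have hDft := crossKey Ff Ft hneFT hinjF hinjT
    have hminAB : (A ∩ B).card ≤ min A.card B.card :=
      le_min (Finset.card_le_card Finset.inter_subset_left)
        (Finset.card_le_card Finset.inter_subset_right)
    have hminBA : (B ∩ A).card ≤ min A.card B.card := by
      rw [min_comm]
      exact le_min (Finset.card_le_card Finset.inter_subset_left)
        (Finset.card_le_card Finset.inter_subset_right)
    rw [hcardS, hsplit, hDtt, hDff]
    calc Edeg n A
          + (∑ u ∈ Ft, ∑ w ∈ Ff, if (cubeGraph (n+1)).Adj u w then 1 else 0)
          + ((∑ u ∈ Ff, ∑ w ∈ Ft, if (cubeGraph (n+1)).Adj u w then 1 else 0) + Edeg n B)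
        ≤ 2 * A.card * Nat.log 2 A.card + min A.card B.card
          + (min A.card B.card + 2 * B.card * Nat.log 2 B.card) :=
          add_le_add (add_le_add (IH A) (le_trans hDtf hminAB))
            (add_le_add (le_trans hDft hminBA) (IH B))
      _ = 2 * (A.card * Nat.log 2 A.card + B.card * Nat.log 2 B.card + min A.card B.card) := by
          ring
      _ ≤ 2 * ((A.card + B.card) * Nat.log 2 (A.card + B.card)) :=
          Nat.mul_le_mul_left 2 (log_key A.card B.card)
      _ = 2 * (A.card + B.card) * Nat.log 2 (A.card + B.card) := by ring

lemma edgeBoundary_ge (S : Finset (V n)) :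
    n * S.card - 2 * S.card * Nat.log 2 S.card ≤ edgeBoundary n S := by
  have h1 := boundary_add_Edeg S
  have h2 := Edeg_le n S
  omega
def flipN (n : ℕ) (k : ℕ) (u : V n) : V n :=
  if h : k < n then flipV n ⟨k, h⟩ u else u

def dec (n : ℕ) (v : V n) (c : ℕ → ℕ × ℕ) : ℕ → V n
  | 0 => v
  | i + 1 => flipN n (c (i + 1)).2 (dec n v c ((c (i + 1)).1 % (i + 1)))
termination_by i => i
decreasing_by exact Nat.mod_lt _ (Nat.succ_pos i)

lemma dec_congr (n : ℕ) (v : V n) (c c' : ℕ → ℕ × ℕ) :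
    ∀ i, (∀ j, 0 < j → j ≤ i → c j = c' j) → dec n v c i = dec n v c' i := by
  intro i
  induction i using Nat.strong_induction_on with
  | _ i IH =>
    intro hagree
    match i with
    | 0 => simp [dec]
    | i + 1 =>
      rw [dec, dec]
      have hc : c (i + 1) = c' (i + 1) := hagree (i + 1) (Nat.succ_pos i) le_rfl
      rw [← hc]
      have hmod : (c (i + 1)).1 % (i + 1) < i + 1 := Nat.mod_lt _ (Nat.succ_pos i)
      exact congrArg (flipN n (c (i + 1)).2)
        (IH _ hmod fun j hj hji => hagree j hj (by omega))

def GoodL (n : ℕ) (l : List (V n)) : Prop :=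
  ∀ i (hi : i < l.length), 0 < i →
    ∃ j, ∃ hj : j < i, (cubeGraph n).Adj (l[j]'(hj.trans hi)) (l[i]'hi)

lemma grow (n : ℕ) (S : Finset (V n))
    (hconn : ((cubeGraph n).induce (S : Set (V n))).Connected) :
    ∀ (k : ℕ) (l : List (V n)), l ≠ [] → l.Nodup → l.toFinset ⊆ S → GoodL n l →
      l.toFinset.card + k = S.card →
      ∃ l' : List (V n), l' ≠ [] ∧ l'.Nodup ∧ l'.toFinset = S ∧ GoodL n l' := by
  intro k
  induction k with
  | zero =>
    intro l hne hnd hsub hg hcard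
    exact ⟨l, hne, hnd, Finset.eq_of_subset_of_card_le hsub (by omega), hg⟩
  | succ k IH =>
    intro l hne hnd hsub hg hcard
    have hssub : l.toFinset ≠ S := fun h => by rw [h] at hcard; omega
    obtain ⟨w0, hw0S, hw0l⟩ := Finset.exists_of_ssubset (ssubset_of_subset_of_ne hsub hssub)
    obtain ⟨u0, hu0⟩ := List.exists_mem_of_ne_nil l hne
    have hu0l : u0 ∈ l.toFinset := List.mem_toFinset.mpr hu0
    have hu0S : u0 ∈ S := hsub hu0l
    obtain ⟨p⟩ := hconn.preconnected ⟨u0, Finset.mem_coe.mpr hu0S⟩ ⟨w0, Finset.mem_coe.mpr hw0S⟩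
    obtain ⟨d, _, hd1, hd2⟩ :=
      p.exists_boundary_dart {x : (S : Set (V n)) | (x : V n) ∈ l.toFinset} hu0l hw0l
    have hadj : (cubeGraph n).Adj (d.fst : V n) (d.snd : V n) := d.adj
    set w : V n := (d.snd : V n) with hw
    have hwS : w ∈ S := Finset.mem_coe.mp d.snd.2
    have hwl : w ∉ l.toFinset := hd2
    have hfmem : (d.fst : V n) ∈ l.toFinset := hd1
    have hwnotl : w ∉ l := fun h => hwl (List.mem_toFinset.mpr h)
    have htf : (l ++ [w]).toFinset = insert w l.toFinset := by
      rw [List.toFinset_append]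
      ext x
      simp [or_comm]
    refine IH (l ++ [w]) (by simp) ?_ ?_ ?_ ?_
    · rw [List.nodup_append]
      exact ⟨hnd, List.nodup_singleton w, by intro a ha b hb hab; rw [List.mem_singleton] at hb; subst hb; exact hwnotl (hab ▸ ha)⟩
    · rw [htf]
      exact Finset.insert_subset hwS hsub
    · intro i hi h0
      rw [List.length_append, List.length_singleton] at hi
      by_cases hil : i < l.length
      · obtain ⟨j, hj, hadj'⟩ := hg i hil h0
        refine ⟨j, hj, ?_⟩
        rw [List.getElem_append_left (hj.trans hil), List.getElem_append_left hil]
        exact hadj'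
      · have hieq : i = l.length := by omega
        obtain ⟨j, hjl, hjeq⟩ := List.mem_iff_getElem.mp (List.mem_toFinset.mp hfmem)
        refine ⟨j, by omega, ?_⟩
        have e1 : (l ++ [w])[j]'(by rw [List.length_append]; omega) = l[j]'hjl :=
          List.getElem_append_left hjl
        have e2 : (l ++ [w])[i]'(by rw [List.length_append, List.length_singleton]; omega) = w := by
          exact List.getElem_concat_length hieq _
        rw [e1, e2, hjeq]
        exact hadj
    · rw [htf, Finset.card_insert_of_notMem hwl]
      omega

lemma exists_goodList (n : ℕ) (S : Finset (V n)) (hSne : S.Nonempty)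
    (hconn : ((cubeGraph n).induce (S : Set (V n))).Connected) :
    ∃ l : List (V n), l ≠ [] ∧ l.Nodup ∧ l.toFinset = S ∧ GoodL n l := by
  obtain ⟨u0, hu0⟩ := hSne
  refine grow n S hconn (S.card - 1) [u0] (by simp) (List.nodup_singleton u0) ?_ ?_ ?_
  · simp [Finset.singleton_subset_iff, hu0]
  · intro i hi h0
    simp at hi
    omega
  · have h1 : ({u0} : Finset (V n)).card = 1 := Finset.card_singleton u0
    have h2 : 1 ≤ S.card := Finset.card_pos.mpr ⟨u0, hu0⟩
    simp only [List.toFinset_cons, List.toFinset_nil, LawfulSingleton.insert_empty_eq]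
    rw [h1]
    omega

def liftC (s n : ℕ) (c : Fin s → Fin s × Fin n) : ℕ → ℕ × ℕ :=
  fun i => if h : i < s then ((c ⟨i, h⟩).1.val, (c ⟨i, h⟩).2.val) else (0, 0)

lemma exists_code (n : ℕ) (hn : 0 < n) {s : ℕ} (hs : 0 < s) (S : Finset (V n))
    (hcard : S.card = s)
    (hconn : ((cubeGraph n).induce (S : Set (V n))).Connected) :
    ∃ (v : V n) (c : Fin s → Fin s × Fin n),
      (Finset.range s).image (dec n v (liftC s n c)) = S := by
  classical
  obtain ⟨l, hne, hnd, htf, hg⟩ := exists_goodList n S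
    (Finset.card_pos.mp (by omega)) hconn
  have hlen : l.length = s := by
    rw [← List.toFinset_card_of_nodup hnd, htf, hcard]
  have hlpos : 0 < l.length := by omega
  set v : V n := l[0]'hlpos with hv
  set fl : ℕ → V n := fun i => l.getD i v with hfl
  have hfleq : ∀ i (hi : i < l.length), fl i = l[i]'hi := by
    intro i hi
    simp [hfl, List.getD_eq_getElem?_getD, List.getElem?_eq_getElem hi]
  have hc : ∀ i : ℕ, ∃ jk : ℕ × ℕ,
      (0 < i → i < s → jk.1 < i ∧ jk.2 < n ∧ fl i = flipN n jk.2 (fl jk.1)) := by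
    intro i
    by_cases h : 0 < i ∧ i < s
    · obtain ⟨j, hj, hadj⟩ := hg i (by omega) h.1
      obtain ⟨k, hk⟩ := eq_flip_of_adj hadj
      refine ⟨(j, k.val), fun _ _ => ⟨hj, k.isLt, ?_⟩⟩
      rw [hfleq i (by omega), hfleq j (by omega)]
      rw [hk]
      simp [flipN, k.isLt]
    · exact ⟨(0, 0), fun h1 h2 => absurd ⟨h1, h2⟩ h⟩
  choose c0 hc0 using hc
  have key : ∀ i, i < s → dec n v c0 i = fl i := by
    intro i
    induction i using Nat.strong_induction_on with
    | _ i IH =>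
      intro hi
      match i with
      | 0 =>
        have h1 : dec n v c0 0 = v := by simp [dec]
        rw [h1, hfleq 0 hlpos]
      | i + 1 =>
        obtain ⟨hj, hk, hflip⟩ := hc0 (i + 1) (Nat.succ_pos i) hi
        rw [dec]
        rw [Nat.mod_eq_of_lt hj]
        rw [IH _ (by omega) (by omega), hflip]
  -- build Fin-code
  refine ⟨v, fun i => if h : 0 < i.val ∧ (c0 i.val).1 < s ∧ (c0 i.val).2 < n
      then (⟨(c0 i.val).1, h.2.1⟩, ⟨(c0 i.val).2, h.2.2⟩) else (⟨0, hs⟩, ⟨0, hn⟩), ?_⟩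
  have hagree : ∀ i, i < s → dec n v (liftC s n (fun i : Fin s =>
      if h : 0 < i.val ∧ (c0 i.val).1 < s ∧ (c0 i.val).2 < n
      then (⟨(c0 i.val).1, h.2.1⟩, ⟨(c0 i.val).2, h.2.2⟩) else (⟨0, hs⟩, ⟨0, hn⟩))) i
      = dec n v c0 i := by
    intro i hi
    apply dec_congr
    intro j hj hji
    obtain ⟨hj1, hj2, _⟩ := hc0 j hj (by omega)
    have hjs : j < s := by omega
    simp only [liftC, dif_pos hjs]
    rw [dif_pos ⟨hj, by omega, hj2⟩]
  have himg : ∀ x, x ∈ (Finset.range s).image (dec n v c0) ↔ x ∈ S := by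
    intro x
    rw [Finset.mem_image]
    constructor
    · rintro ⟨i, hi, rfl⟩
      rw [Finset.mem_range] at hi
      rw [key i hi, hfleq i (by omega)]
      have hmem : l[i]'(by omega) ∈ l.toFinset :=
        List.mem_toFinset.mpr (List.mem_iff_getElem.mpr ⟨i, by omega, rfl⟩)
      rwa [htf] at hmem
    · intro hx
      obtain ⟨i, hil, hieq⟩ := List.mem_iff_getElem.mp (List.mem_toFinset.mp (htf ▸ hx))
      exact ⟨i, Finset.mem_range.mpr (by omega), by rw [key i (by omega), hfleq i hil, hieq]⟩
  ext x
  rw [Finset.mem_image]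
  constructor
  · rintro ⟨i, hi, rfl⟩
    rw [Finset.mem_range] at hi
    rw [hagree i hi]
    exact (himg _).mp (Finset.mem_image.mpr ⟨i, Finset.mem_range.mpr hi, rfl⟩)
  · intro hx
    obtain ⟨i, hi, hieq⟩ := Finset.mem_image.mp ((himg x).mpr hx)
    rw [Finset.mem_range] at hi
    exact ⟨i, Finset.mem_range.mpr hi, by rw [hagree i hi]; exact hieq⟩

open scoped Classical in
lemma conn_count (n s : ℕ) (hn : 0 < n) (hs : 0 < s) :
    (Finset.univ.filter fun S : Finset (V n) =>
        S.card = s ∧ ((cubeGraph n).induce (S : Set (V n))).Connected).card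
      ≤ 2 ^ n * (s * n) ^ s := by
  have hne : Nonempty (V n × (Fin s → Fin s × Fin n)) :=
    ⟨(fun _ => false, fun _ => (⟨0, hs⟩, ⟨0, hn⟩))⟩
  set enc : Finset (V n) → V n × (Fin s → Fin s × Fin n) := fun S =>
    if h : ∃ vc : V n × (Fin s → Fin s × Fin n),
        (Finset.range s).image (dec n vc.1 (liftC s n vc.2)) = S
    then h.choose else Classical.arbitrary _ with henc
  have hcard : (Finset.univ.filter fun S : Finset (V n) =>
      S.card = s ∧ ((cubeGraph n).induce (S : Set (V n))).Connected).card
      ≤ Fintype.card (V n × (Fin s → Fin s × Fin n)) := by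
    rw [← Finset.card_univ]
    apply Finset.card_le_card_of_injOn enc (fun _ _ => Finset.mem_univ _)
    intro S1 h1 S2 h2 heq
    simp only [Finset.coe_filter, Set.mem_setOf_eq, Finset.mem_univ, true_and] at h1 h2
    obtain ⟨v1, c1, hvc1⟩ := exists_code n hn (by omega : 0 < s) S1 h1.1 h1.2
    obtain ⟨v2, c2, hvc2⟩ := exists_code n hn (by omega : 0 < s) S2 h2.1 h2.2
    have he1 : ∃ vc : V n × (Fin s → Fin s × Fin n),
        (Finset.range s).image (dec n vc.1 (liftC s n vc.2)) = S1 := ⟨(v1, c1), hvc1⟩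
    have he2 : ∃ vc : V n × (Fin s → Fin s × Fin n),
        (Finset.range s).image (dec n vc.1 (liftC s n vc.2)) = S2 := ⟨(v2, c2), hvc2⟩
    have hS1 := he1.choose_spec
    have hS2 := he2.choose_spec
    rw [henc] at heq
    simp only [dif_pos he1, dif_pos he2] at heq
    rw [← hS1, ← hS2, heq]
  calc (Finset.univ.filter fun S : Finset (V n) =>
      S.card = s ∧ ((cubeGraph n).induce (S : Set (V n))).Connected).card
      ≤ Fintype.card (V n × (Fin s → Fin s × Fin n)) := hcard
    _ = 2 ^ n * (s * n) ^ s := by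
        simp [Fintype.card_prod, Fintype.card_fun, Fintype.card_fin, Fintype.card_bool]
open scoped Classical in
lemma term_bound (p : ℝ) (hp0 : 0 < p) (hp1 : p < 1) (ε : ℝ) (hε8 : ε ≤ 1/8)
    (n s : ℕ) (hn : 0 < n) (hs : 0 < s) (hsM : (s:ℝ) ≤ (2:ℝ) ^ (ε * (n:ℝ))) :
    g n p s ≤ (2:ℝ) ^ (n:ℕ)
      * ((2:ℝ) ^ (ε * (n:ℝ)) * (n:ℝ) * ((1-p) ^ ((3:ℝ)/4)) ^ (n:ℕ)) ^ s := by
  classical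
  unfold g
  have hq0 : (0:ℝ) < 1 - p := by linarith
  have hq1 : (1:ℝ) - p < 1 := by linarith
  set q : ℝ := 1 - p with hqdef
  set L : ℕ := Nat.log 2 s with hLdef
  set m : ℕ := n * s - 2 * s * L with hmdef
  have hLr : (L:ℝ) ≤ ε * n := by
    have h1 : ((2:ℝ) ^ (L:ℕ)) ≤ (s:ℝ) := by
      exact_mod_cast Nat.pow_log_le_self 2 hs.ne'
    have h2 : (2:ℝ) ^ ((L:ℕ):ℝ) ≤ (2:ℝ) ^ (ε * (n:ℝ)) := by
      rw [Real.rpow_natCast]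
      exact h1.trans hsM
    exact (Real.rpow_le_rpow_left_iff (by norm_num : (1:ℝ) < 2)).mp h2
  have hεn : ε * n ≤ (n:ℝ)/8 := by
    have h0 : (0:ℝ) ≤ n := Nat.cast_nonneg n
    nlinarith
  have hLr8 : (L:ℝ) ≤ (n:ℝ)/8 := hLr.trans hεn
  have hnat : 2 * s * L ≤ n * s := by
    have hr : ((2 * s * L : ℕ) : ℝ) ≤ ((n * s : ℕ) : ℝ) := by
      push_cast
      have h2 : (0:ℝ) ≤ s := Nat.cast_nonneg s
      nlinarith
    exact_mod_cast hr
  have hmr : (3:ℝ)/4 * ((n:ℝ) * (s:ℝ)) ≤ (m:ℝ) := by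
    rw [hmdef, Nat.cast_sub hnat]
    push_cast
    have h2 : (0:ℝ) ≤ s := Nat.cast_nonneg s
    nlinarith
  have hterm : ∀ S ∈ (Finset.univ.filter fun S : Finset (V n) =>
      S.card = s ∧ ((cubeGraph n).induce (S : Set (V n))).Connected),
      q ^ edgeBoundary n S ≤ q ^ m := by
    intro S hS
    rw [Finset.mem_filter] at hS
    have hb := edgeBoundary_ge S
    rw [hS.2.1] at hb
    exact pow_le_pow_of_le_one hq0.le hq1.le hb
  have hqm : q ^ m ≤ ((q ^ ((3:ℝ)/4)) ^ (n:ℕ)) ^ s := by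
    have e1 : (q:ℝ) ^ (m:ℕ) = q ^ ((m:ℕ):ℝ) := (Real.rpow_natCast q m).symm
    have e2 : q ^ ((m:ℕ):ℝ) ≤ q ^ ((3:ℝ)/4 * ((n:ℝ) * (s:ℝ))) :=
      Real.rpow_le_rpow_of_exponent_ge hq0 hq1.le hmr
    have e3 : q ^ ((3:ℝ)/4 * ((n:ℝ) * (s:ℝ))) = ((q ^ ((3:ℝ)/4)) ^ (n:ℕ)) ^ s := by
      rw [show (3:ℝ)/4 * ((n:ℝ) * (s:ℝ)) = ((3:ℝ)/4 * (n:ℝ)) * (s:ℝ) by ring]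
      rw [Real.rpow_mul hq0.le, Real.rpow_mul hq0.le]
      rw [Real.rpow_natCast, Real.rpow_natCast]
    rw [e1, ← e3]
    exact e2
  have hcount := conn_count n s hn hs
  calc (∑ S ∈ Finset.univ.filter fun S : Finset (V n) =>
        S.card = s ∧ ((cubeGraph n).induce (S : Set (V n))).Connected,
        q ^ edgeBoundary n S)
      ≤ (Finset.univ.filter fun S : Finset (V n) =>
        S.card = s ∧ ((cubeGraph n).induce (S : Set (V n))).Connected).card • (q ^ m) :=
        Finset.sum_le_card_nsmul _ _ _ hterm
    _ = ((Finset.univ.filter fun S : Finset (V n) =>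
        S.card = s ∧ ((cubeGraph n).induce (S : Set (V n))).Connected).card : ℝ) * q ^ m := by
        rw [nsmul_eq_mul]
    _ ≤ ((2 ^ n * (s * n) ^ s : ℕ) : ℝ) * q ^ m := by
        have hc : ((Finset.univ.filter fun S : Finset (V n) =>
            S.card = s ∧ ((cubeGraph n).induce (S : Set (V n))).Connected).card : ℝ)
            ≤ ((2 ^ n * (s * n) ^ s : ℕ) : ℝ) := by exact_mod_cast hcount
        exact mul_le_mul_of_nonneg_right hc (pow_nonneg hq0.le _)
    _ = (2:ℝ) ^ (n:ℕ) * (((s:ℝ) * (n:ℝ)) ^ s * q ^ m) := by push_cast; ring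
    _ ≤ (2:ℝ) ^ (n:ℕ) * (((2:ℝ) ^ (ε * (n:ℝ)) * (n:ℝ)) ^ s * (((q ^ ((3:ℝ)/4)) ^ (n:ℕ)) ^ s)) := by
        apply mul_le_mul_of_nonneg_left _ (by positivity)
        apply mul_le_mul
        · apply pow_le_pow_left₀ (by positivity)
          exact mul_le_mul_of_nonneg_right hsM (Nat.cast_nonneg n)
        · exact hqm
        · exact pow_nonneg hq0.le _
        · positivity
    _ = (2:ℝ) ^ (n:ℕ) * ((2:ℝ) ^ (ε * (n:ℝ)) * (n:ℝ) * ((q ^ ((3:ℝ)/4)) ^ (n:ℕ))) ^ s := by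
        ring
end CubeAux

open CubeAux

set_option maxHeartbeats 1000000

/-- For any fixed `p ∈ (0,1)` there are a natural number `T_p` and constants `δ, ε > 0`
such that for all sufficiently large `n`,
`Σ_{s=T_p}^{⌊2^{εn}⌋} g(s) < 2^{−δn}`. -/
theorem g_sum_small (p : ℝ) (hp0 : 0 < p) (hp1 : p < 1) :
    ∃ T : ℕ, ∃ δ > (0 : ℝ), ∃ ε > (0 : ℝ), ∃ N : ℕ, ∀ n ≥ N,
      (∑ s ∈ Finset.Icc T ⌊(2 : ℝ) ^ (ε * n)⌋₊, g n p s) < (2 : ℝ) ^ (-δ * n) := by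
  classical
  have hq0 : (0:ℝ) < 1 - p := by linarith
  have hq1 : (1:ℝ) - p < 1 := by linarith
  set q : ℝ := 1 - p with hqdef
  obtain ⟨K0, hK0⟩ := exists_pow_lt_of_lt_one (show (0:ℝ) < 1/16 by norm_num) hq1
  set K : ℕ := K0 + 1 with hKdef
  have hqK : q ^ K < 1/16 :=
    lt_of_le_of_lt (pow_le_pow_of_le_one hq0.le hq1.le (by omega)) hK0
  set T : ℕ := 4 * K with hTdef
  have hT1 : 1 ≤ T := by omega
  set ℓ : ℝ := Real.logb 2 q⁻¹ with hldef
  have hlpos : 0 < ℓ := Real.logb_pos (by norm_num) ((one_lt_inv_iff₀).mpr ⟨hq0, hq1⟩)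
  have hTR : (1:ℝ) ≤ (T:ℝ) := by exact_mod_cast hT1
  set ε : ℝ := min (1/(8*(T:ℝ))) (ℓ/2) with hεdef
  have hεpos : 0 < ε := lt_min (by positivity) (by positivity)
  have hε8 : ε ≤ 1/8 := le_trans (min_le_left _ _) (by
    rw [div_le_div_iff₀ (by positivity) (by norm_num)]
    nlinarith)
  have hεT : ε * T ≤ 1/8 := by
    have h1 : ε ≤ 1/(8*(T:ℝ)) := min_le_left _ _
    have hTpos : (0:ℝ) < T := by linarith
    calc ε * T ≤ (1/(8*(T:ℝ))) * T := mul_le_mul_of_nonneg_right h1 hTpos.le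
      _ = 1/8 := by field_simp
  set σ : ℝ := (2:ℝ)^ε * q^((3:ℝ)/4) with hσdef
  have hσ0 : (0:ℝ) ≤ σ := by positivity
  have hσlt : σ < 1 := by
    have e1 : q ^ ((3:ℝ)/4) = (2:ℝ) ^ (Real.logb 2 q * ((3:ℝ)/4)) := by
      conv_lhs => rw [← Real.rpow_logb (by norm_num : (0:ℝ) < 2) (by norm_num) hq0]
      rw [← Real.rpow_mul (by norm_num : (0:ℝ) ≤ 2)]
    rw [hσdef, e1, ← Real.rpow_add (by norm_num : (0:ℝ) < 2)]
    have hlogq : Real.logb 2 q = -ℓ := by rw [hldef, Real.logb_inv]; ring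
    rw [hlogq]
    have hεl : ε ≤ ℓ/2 := min_le_right _ _
    have hexp : ε + -ℓ * ((3:ℝ)/4) < 0 := by nlinarith
    calc (2:ℝ) ^ (ε + -ℓ*((3:ℝ)/4)) < 2 ^ (0:ℝ) :=
          Real.rpow_lt_rpow_of_exponent_lt (by norm_num) hexp
      _ = 1 := Real.rpow_zero 2
  have h18 : (2:ℝ)^((1:ℝ)/8) ≤ 2 := by
    calc (2:ℝ)^((1:ℝ)/8) ≤ (2:ℝ)^(1:ℝ) :=
          Real.rpow_le_rpow_of_exponent_le (by norm_num) (by norm_num)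
      _ = 2 := Real.rpow_one 2
  have h180 : (0:ℝ) ≤ (2:ℝ)^((1:ℝ)/8) := by positivity
  have hσT : σ^T ≤ (2:ℝ)^((1:ℝ)/8) * q^(3*K) := by
    rw [hσdef, mul_pow]
    have hq34 : ((q ^ ((3:ℝ)/4)) ^ T) = q ^ (3*K : ℕ) := by
      rw [← Real.rpow_natCast (q ^ ((3:ℝ)/4)) T, ← Real.rpow_mul hq0.le]
      rw [show (3:ℝ)/4 * (T:ℝ) = ((3*K : ℕ):ℝ) by rw [hTdef]; push_cast; ring]
      rw [Real.rpow_natCast]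
    rw [hq34]
    have h2e : ((2:ℝ)^ε)^T ≤ (2:ℝ)^((1:ℝ)/8) := by
      rw [← Real.rpow_natCast ((2:ℝ)^ε) T, ← Real.rpow_mul (by norm_num : (0:ℝ) ≤ 2)]
      exact Real.rpow_le_rpow_of_exponent_le (by norm_num) hεT
    exact mul_le_mul_of_nonneg_right h2e (by positivity)
  set ρ : ℝ := (2:ℝ)^((1:ℝ)/8) * 2 * ((2:ℝ)^((1:ℝ)/8) * q^(3*K)) with hρdef
  set ρ2 : ℝ := 2 * ρ with hρ2def
  have hρ0 : (0:ℝ) ≤ ρ := by positivity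
  have hρ20 : (0:ℝ) ≤ ρ2 := by positivity
  have hq3K : q^(3*K) ≤ q^K := pow_le_pow_of_le_one hq0.le hq1.le (by omega)
  have hq3K0 : (0:ℝ) ≤ q^(3*K) := by positivity
  have hρ2lt : ρ2 < 1 := by
    rw [hρ2def, hρdef]
    have ha2 : (2:ℝ)^((1:ℝ)/8) * (2:ℝ)^((1:ℝ)/8) ≤ 4 := by nlinarith
    have hq316 : q^(3*K) < 1/16 := lt_of_le_of_lt hq3K hqK
    nlinarith
  -- eventual facts
  have htend1 : Filter.Tendsto (fun n : ℕ => (n:ℝ)^1 * σ^n) Filter.atTop (nhds 0) :=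
    tendsto_pow_const_mul_const_pow_of_lt_one 1 hσ0 hσlt
  have htend2 : Filter.Tendsto (fun n : ℕ => (n:ℝ)^T * ρ2^n) Filter.atTop (nhds 0) :=
    tendsto_pow_const_mul_const_pow_of_lt_one T hρ20 hρ2lt
  have Ev1 : ∀ᶠ n : ℕ in Filter.atTop, (n:ℝ) * σ^n ≤ 1 := by
    filter_upwards [htend1.eventually (gt_mem_nhds (show (0:ℝ) < 1 by norm_num))] with n hn
    rw [pow_one] at hn
    exact hn.le
  have Ev2 : ∀ᶠ n : ℕ in Filter.atTop, 2 * ((n:ℝ)^T * ρ2^n) < 1 := by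
    filter_upwards [htend2.eventually (gt_mem_nhds (show (0:ℝ) < 1/2 by norm_num))] with n hn
    linarith
  obtain ⟨N0, hN0⟩ := Filter.eventually_atTop.mp (Ev1.and Ev2)
  refine ⟨T, 1, one_pos, ε, hεpos, max N0 1, ?_⟩
  intro n hn
  have hn1 : 1 ≤ n := le_trans (le_max_right N0 1) hn
  obtain ⟨hEv1n, hEv2n⟩ := hN0 n (le_trans (le_max_left N0 1) hn)
  set M : ℕ := ⌊(2:ℝ)^(ε*(n:ℝ))⌋₊ with hMdef
  have htn : (2:ℝ)^(ε*(n:ℝ)) * (n:ℝ) * ((q^((3:ℝ)/4))^(n:ℕ)) = (n:ℝ) * σ^n := by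
    rw [show (2:ℝ)^(ε*(n:ℝ)) = ((2:ℝ)^ε)^(n:ℕ) from by
      rw [Real.rpow_mul (by norm_num : (0:ℝ) ≤ 2), Real.rpow_natCast]]
    rw [hσdef, mul_pow]
    ring
  have ht0 : (0:ℝ) ≤ (n:ℝ) * σ^n := by positivity
  have hterm : ∀ s ∈ Finset.Icc T M, g n p s ≤ (2:ℝ)^(n:ℕ) * ((n:ℝ)*σ^n)^T := by
    intro s hs
    rw [Finset.mem_Icc] at hs
    have hsM : (s:ℝ) ≤ (2:ℝ)^(ε*(n:ℝ)) :=
      (Nat.le_floor_iff (by positivity)).mp hs.2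
    have hb := term_bound p hp0 hp1 ε hε8 n s (by omega) (by omega) hsM
    rw [htn] at hb
    refine hb.trans ?_
    apply mul_le_mul_of_nonneg_left _ (by positivity)
    exact pow_le_pow_of_le_one ht0 hEv1n hs.1
  have hsum := Finset.sum_le_card_nsmul _ _ _ hterm
  have hcardIcc : ((Finset.Icc T M).card : ℝ) ≤ 2 * (2:ℝ)^(ε*(n:ℝ)) := by
    have h1 : (Finset.Icc T M).card ≤ M + 1 := by rw [Nat.card_Icc]; omega
    have h2 : ((M:ℕ):ℝ) ≤ (2:ℝ)^(ε*(n:ℝ)) := Nat.floor_le (by positivity)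
    have h3 : (1:ℝ) ≤ (2:ℝ)^(ε*(n:ℝ)) := by
      rw [show (1:ℝ) = (2:ℝ)^(0:ℝ) from (Real.rpow_zero 2).symm]
      exact Real.rpow_le_rpow_of_exponent_le (by norm_num) (by positivity)
    calc ((Finset.Icc T M).card : ℝ) ≤ ((M + 1 : ℕ):ℝ) := by exact_mod_cast h1
      _ = (M:ℝ) + 1 := by push_cast; ring
      _ ≤ (2:ℝ)^(ε*(n:ℝ)) + (2:ℝ)^(ε*(n:ℝ)) := add_le_add h2 h3
      _ = 2 * (2:ℝ)^(ε*(n:ℝ)) := by ring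
  have hA : 2 * (2:ℝ)^(ε*(n:ℝ)) * ((2:ℝ)^(n:ℕ) * ((n:ℝ)*σ^n)^T)
      ≤ 2 * (n:ℝ)^T * ρ^n := by
    have e1 : ((n:ℝ)*σ^n)^T = (n:ℝ)^T * (σ^T)^n := by
      rw [mul_pow, pow_right_comm]
    have e2 : (2:ℝ)^(ε*(n:ℝ)) ≤ ((2:ℝ)^((1:ℝ)/8))^n := by
      rw [← Real.rpow_natCast ((2:ℝ)^((1:ℝ)/8)) n, ← Real.rpow_mul (by norm_num : (0:ℝ) ≤ 2)]
      apply Real.rpow_le_rpow_of_exponent_le (by norm_num)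
      have h0 : (0:ℝ) ≤ n := Nat.cast_nonneg n
      nlinarith
    have e3 : (σ^T)^n ≤ ((2:ℝ)^((1:ℝ)/8) * q^(3*K))^n :=
      pow_le_pow_left₀ (by positivity) hσT n
    have eρ : ρ^n = ((2:ℝ)^((1:ℝ)/8))^n * (2:ℝ)^n * ((2:ℝ)^((1:ℝ)/8) * q^(3*K))^n := by
      rw [hρdef, mul_pow, mul_pow]
    calc 2 * (2:ℝ)^(ε*(n:ℝ)) * ((2:ℝ)^(n:ℕ) * ((n:ℝ)*σ^n)^T)
        = 2 * (n:ℝ)^T * ((2:ℝ)^(ε*(n:ℝ)) * ((2:ℝ)^(n:ℕ) * (σ^T)^n)) := by rw [e1]; ring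
      _ ≤ 2 * (n:ℝ)^T * (((2:ℝ)^((1:ℝ)/8))^n * ((2:ℝ)^(n:ℕ) * ((2:ℝ)^((1:ℝ)/8) * q^(3*K))^n)) := by
          apply mul_le_mul_of_nonneg_left _ (by positivity)
          apply mul_le_mul e2 _ (by positivity) (by positivity)
          exact mul_le_mul_of_nonneg_left e3 (by positivity)
      _ = 2 * (n:ℝ)^T * ρ^n := by rw [eρ]; ring
  have hfin : 2 * (n:ℝ)^T * ρ^n < (2:ℝ)^(-1*(n:ℝ)) := by
    have h2n : (2:ℝ)^(-1*(n:ℝ)) = ((1:ℝ)/2)^n := by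
      rw [show -1*(n:ℝ) = -(n:ℝ) by ring, Real.rpow_neg (by norm_num : (0:ℝ) ≤ 2),
        Real.rpow_natCast, one_div, inv_pow]
    rw [h2n]
    have hsplit : 2 * (n:ℝ)^T * ρ^n = (2 * ((n:ℝ)^T * ρ2^n)) * ((1:ℝ)/2)^n := by
      rw [show ρ = ρ2 * ((1:ℝ)/2) from by rw [hρ2def]; ring, mul_pow]
      ring
    rw [hsplit]
    calc (2 * ((n:ℝ)^T * ρ2^n)) * ((1:ℝ)/2)^n < 1 * ((1:ℝ)/2)^n :=
          mul_lt_mul_of_pos_right hEv2n (by positivity)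
      _ = ((1:ℝ)/2)^n := one_mul _
  calc (∑ s ∈ Finset.Icc T M, g n p s)
      ≤ (Finset.Icc T M).card • ((2:ℝ)^(n:ℕ) * ((n:ℝ)*σ^n)^T) := hsum
    _ = ((Finset.Icc T M).card : ℝ) * ((2:ℝ)^(n:ℕ) * ((n:ℝ)*σ^n)^T) := nsmul_eq_mul _ _
    _ ≤ (2 * (2:ℝ)^(ε*(n:ℝ))) * ((2:ℝ)^(n:ℕ) * ((n:ℝ)*σ^n)^T) :=
        mul_le_mul_of_nonneg_right hcardIcc (by positivity)
    _ ≤ 2 * (n:ℝ)^T * ρ^n := hA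
    _ < (2:ℝ)^(-1*(n:ℝ)) := hfin
end

section
/- Fix p > 1 − (1/2)^{1/2} and a constant M ≥ 0. With probability tending to 1 as n → ∞, no 3-face of Q^n contains two distinct edges of Q_2(n,p) that both have degree at most M. -/
open Finset

/-- A 3-face of the `n`-cube in star notation. -/
abbrev ThreeFace (n : ℕ) :=
  {x : Fin n → Option Bool // (Finset.univ.filter fun i => x i = none).card = 3}

/-- The degree of the edge `e` in the complex with face configuration `ω`: the number of
included 2-faces containing `e`. -/
def edgeDeg (n : ℕ) (ω : TwoFace n → Bool) (e : Sym2 (Fin n → Bool)) : ℕ :=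
  (Finset.univ.filter fun x : TwoFace n => ω x = true ∧ ∀ v, v ∈ e → inFace x.1 v).card

-- Fix `p > 1 − (1/2)^{1/2}` and a constant `M`. With probability tending to `1` as
open scoped Classical

section Cube
variable {n : ℕ}

/-- The set of free coordinates of a face. -/
def freeSet {n : ℕ} (x : Fin n → Option Bool) : Finset (Fin n) :=
  Finset.univ.filter fun i => x i = none

@[simp] lemma mem_freeSet {x : Fin n → Option Bool} {i : Fin n} :
    i ∈ freeSet x ↔ x i = none := by simp [freeSet]

/-- The 2-faces containing all vertices of `e`. -/
noncomputable def faceSet (e : Sym2 (Fin n → Bool)) : Finset (TwoFace n) :=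
  Finset.univ.filter fun x => ∀ v ∈ e, inFace x.1 v

lemma mem_faceSet {e : Sym2 (Fin n → Bool)} {x : TwoFace n} :
    x ∈ faceSet e ↔ ∀ v ∈ e, inFace x.1 v := by simp [faceSet]

lemma fixed_eq {x : Fin n → Option Bool} {w : Fin n → Bool} (h : inFace x w) {i : Fin n}
    (hi : x i ≠ none) : x i = some (w i) := by
  cases hx : x i with
  | none => exact absurd hx hi
  | some b => rw [h i b hx]

lemma eq_of_agree_on_free {x : Fin n → Option Bool} {a b : Fin n → Bool}
    (ha : inFace x a) (hb : inFace x b) (h : ∀ i ∈ freeSet x, a i = b i) : a = b := by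
  funext i
  by_cases hi : i ∈ freeSet x
  · exact h i hi
  · rw [mem_freeSet] at hi
    cases hx : x i with
    | none => exact absurd hx hi
    | some β => rw [ha i β hx, hb i β hx]

lemma twoFace_freeSet_card (x : TwoFace n) : (freeSet x.1).card = 2 := x.2

lemma twoFace_ext {x y : TwoFace n} (w : Fin n → Bool) (hx : inFace x.1 w) (hy : inFace y.1 w)
    (hfree : freeSet x.1 = freeSet y.1) : x = y := by
  apply Subtype.ext; funext i
  by_cases hi : i ∈ freeSet x.1
  · have hi' := hi; rw [hfree] at hi'
    rw [mem_freeSet] at hi hi'; rw [hi, hi']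
  · have hi' := hi; rw [hfree] at hi'
    rw [mem_freeSet] at hi hi'
    rw [fixed_eq hx hi, fixed_eq hy hi']

lemma bool_three {a b c : Bool} (hab : a ≠ b) (hac : a ≠ c) (hbc : b ≠ c) : False := by
  cases a <;> cases b <;> cases c <;> simp_all

lemma freeSet_char {x : TwoFace n} {a b c : Fin n → Bool} (hab : a ≠ b) (hac : a ≠ c)
    (hbc : b ≠ c) (hxa : inFace x.1 a) (hxb : inFace x.1 b) (hxc : inFace x.1 c) :
    freeSet x.1 = Finset.univ.filter fun i => ¬(a i = b i ∧ a i = c i) := by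
  ext i
  simp only [Finset.mem_filter, Finset.mem_univ, true_and]
  constructor
  · intro hi hcontra
    obtain ⟨s, t, hst, hset⟩ := Finset.card_eq_two.mp (twoFace_freeSet_card x)
    have hi2 : i = s ∨ i = t := by
      have := hi; rw [hset] at this; simpa using this
    obtain ⟨i', hi'ne, hpair⟩ : ∃ i', i' ≠ i ∧ freeSet x.1 = {i, i'} := by
      rcases hi2 with rfl | rfl
      · exact ⟨t, fun h => hst h.symm, by rw [hset]⟩
      · exact ⟨s, hst, by rw [hset, Finset.pair_comm]⟩
    have key : ∀ u v : Fin n → Bool, inFace x.1 u → inFace x.1 v → u ≠ v →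
        u i = v i → u i' ≠ v i' := by
      intro u v hu hv huv hui h'
      apply huv
      apply eq_of_agree_on_free hu hv
      intro m hm
      rw [hpair, Finset.mem_insert, Finset.mem_singleton] at hm
      rcases hm with rfl | rfl
      · exact hui
      · exact h'
    exact bool_three (key a b hxa hxb hab hcontra.1)
      (key a c hxa hxc hac hcontra.2)
      (key b c hxb hxc hbc (hcontra.1.symm.trans hcontra.2))
  · intro h
    by_contra hfree
    rw [mem_freeSet] at hfree
    cases hx : x.1 i with
    | none => exact hfree hx
    | some β => exact h ⟨by rw [hxa i β hx, hxb i β hx], by rw [hxa i β hx, hxc i β hx]⟩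

lemma twoFace_unique {x y : TwoFace n} {a b c : Fin n → Bool} (hab : a ≠ b) (hac : a ≠ c)
    (hbc : b ≠ c) (hxa : inFace x.1 a) (hxb : inFace x.1 b) (hxc : inFace x.1 c)
    (hya : inFace y.1 a) (hyb : inFace y.1 b) (hyc : inFace y.1 c) : x = y :=
  twoFace_ext a hxa hya <| by
    rw [freeSet_char hab hac hbc hxa hxb hxc, freeSet_char hab hac hbc hya hyb hyc]

lemma cubeAdj_iff {u v : Fin n → Bool} :
    (cubeGraph n).Adj u v ↔ (Finset.univ.filter fun i => u i ≠ v i).card = 1 := Iff.rfl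

lemma edge_normal {e : Sym2 (Fin n → Bool)} (he : e ∈ (cubeGraph n).edgeFinset) :
    ∃ u v j, e = s(u, v) ∧ u j ≠ v j ∧ (∀ i, i ≠ j → u i = v i) := by
  rw [SimpleGraph.mem_edgeFinset] at he
  induction e using Sym2.ind with
  | _ u v =>
    rw [SimpleGraph.mem_edgeSet] at he
    rw [cubeAdj_iff] at he
    obtain ⟨j, hj⟩ := Finset.card_eq_one.mp he
    refine ⟨u, v, j, rfl, ?_, ?_⟩
    · have : j ∈ Finset.univ.filter fun i => u i ≠ v i := by rw [hj]; simp
      simpa using this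
    · intro i hij
      by_contra hne
      have : i ∈ Finset.univ.filter fun i => u i ≠ v i := by simp [hne]
      rw [hj, Finset.mem_singleton] at this
      exact hij this

lemma edge_ne {e : Sym2 (Fin n → Bool)} (he : e ∈ (cubeGraph n).edgeFinset) :
    ¬ e.IsDiag := by
  rw [SimpleGraph.mem_edgeFinset] at he
  exact SimpleGraph.not_isDiag_of_mem_edgeSet _ he

lemma exists_third {α : Type*} {e₁ e₂ : Sym2 α} (h₂ : ¬ e₂.IsDiag) (hne : e₁ ≠ e₂) :
    ∃ w ∈ e₂, w ∉ e₁ := by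
  induction e₁ using Sym2.ind with
  | _ u v =>
  induction e₂ using Sym2.ind with
  | _ a b =>
    rw [Sym2.mk_isDiag_iff] at h₂
    by_contra hcon
    push_neg at hcon
    have ha : a = u ∨ a = v := Sym2.mem_iff.mp (hcon a (Sym2.mem_mk_left a b))
    have hb : b = u ∨ b = v := Sym2.mem_iff.mp (hcon b (Sym2.mem_mk_right a b))
    apply hne
    rw [Sym2.eq_iff]
    rcases ha with rfl | rfl <;> rcases hb with rfl | rfl <;> tauto

lemma faceSet_inter_card {e₁ e₂ : Sym2 (Fin n → Bool)} (h₁ : e₁ ∈ (cubeGraph n).edgeFinset)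
    (h₂ : e₂ ∈ (cubeGraph n).edgeFinset) (hne : e₁ ≠ e₂) :
    (faceSet e₁ ∩ faceSet e₂).card ≤ 1 := by
  rw [Finset.card_le_one]
  intro x hx y hy
  rw [Finset.mem_inter, mem_faceSet, mem_faceSet] at hx hy
  obtain ⟨u, v, j, rfl, hj, _⟩ := edge_normal h₁
  have huv : u ≠ v := fun h => hj (by rw [h])
  obtain ⟨w, hw2, hw1⟩ := exists_third (edge_ne h₂) hne
  rw [Sym2.mem_iff] at hw1
  push_neg at hw1
  exact twoFace_unique huv (fun h => hw1.1 h.symm) (fun h => hw1.2 h.symm)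
    (hx.1 u (Sym2.mem_mk_left u v)) (hx.1 v (Sym2.mem_mk_right u v)) (hx.2 w hw2)
    (hy.1 u (Sym2.mem_mk_left u v)) (hy.1 v (Sym2.mem_mk_right u v)) (hy.2 w hw2)

/-- The 2-face with free coordinates `j, k`, fixed elsewhere to agree with `u`. -/
def mkFace (u : Fin n → Bool) (j k : Fin n) : Fin n → Option Bool :=
  fun i => if i = j ∨ i = k then none else some (u i)

lemma mkFace_eq_none_iff {u : Fin n → Bool} {j k i : Fin n} :
    mkFace u j k i = none ↔ i = j ∨ i = k := by
  unfold mkFace; split <;> simp_all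

lemma freeSet_mkFace {u : Fin n → Bool} {j k : Fin n} :
    freeSet (mkFace u j k) = {j, k} := by
  ext i; simp [mkFace_eq_none_iff]

lemma inFace_mkFace_self (u : Fin n → Bool) (j k : Fin n) : inFace (mkFace u j k) u := by
  intro i b h
  unfold mkFace at h
  split at h
  · exact absurd h (by simp)
  · simpa using h

lemma inFace_mkFace {u v : Fin n → Bool} (j k : Fin n) (hoff : ∀ i, i ≠ j → u i = v i) :
    inFace (mkFace u j k) v := by
  intro i b h
  unfold mkFace at h
  by_cases hc : i = j ∨ i = k
  · rw [if_pos hc] at h; exact absurd h (by simp)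
  · rw [if_neg hc] at h
    push_neg at hc
    have : u i = b := by simpa using h
    rw [← this, hoff i hc.1]

lemma faceSet_card {u v : Fin n → Bool} {j : Fin n} (hj : u j ≠ v j)
    (hoff : ∀ i, i ≠ j → u i = v i) : (faceSet (s(u, v))).card = n - 1 := by
  have hval : (faceSet (s(u, v))).image Subtype.val
      = (Finset.univ.erase j).image (mkFace u j) := by
    ext y
    simp only [Finset.mem_image, Finset.mem_erase, Finset.mem_univ, and_true]
    constructor
    · rintro ⟨x, hx, rfl⟩
      rw [mem_faceSet] at hx
      have hxu : inFace x.1 u := hx u (Sym2.mem_mk_left u v)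
      have hxv : inFace x.1 v := hx v (Sym2.mem_mk_right u v)
      have hjfree : j ∈ freeSet x.1 := by
        rw [mem_freeSet]
        cases hc : x.1 j with
        | none => rfl
        | some β => exact absurd ((hxu j β hc).trans (hxv j β hc).symm) hj
      obtain ⟨s, t, hst, hset⟩ := Finset.card_eq_two.mp (twoFace_freeSet_card x)
      have hj2 : j = s ∨ j = t := by
        have := hjfree; rw [hset] at this; simpa using this
      obtain ⟨k, hk, hpair⟩ : ∃ k, k ≠ j ∧ freeSet x.1 = {j, k} := by
        rcases hj2 with rfl | rfl
        · exact ⟨t, fun h => hst h.symm, by rw [hset]⟩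
        · exact ⟨s, hst, by rw [hset, Finset.pair_comm]⟩
      refine ⟨k, hk, ?_⟩
      funext i
      by_cases hi : i = j ∨ i = k
      · have : i ∈ freeSet x.1 := by rw [hpair]; simpa using hi
        rw [mem_freeSet] at this
        rw [(mkFace_eq_none_iff).mpr hi, this]
      · have : i ∉ freeSet x.1 := by rw [hpair]; simpa using hi
        rw [mem_freeSet] at this
        rw [fixed_eq hxu this]
        unfold mkFace
        rw [if_neg hi]
    · rintro ⟨k, hk, rfl⟩
      have hcard : (Finset.univ.filter fun i => mkFace u j k i = none).card = 2 := by
        have : (Finset.univ.filter fun i => mkFace u j k i = none) = {j, k} := by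
          ext i; simp [mkFace_eq_none_iff]
        rw [this, Finset.card_insert_of_notMem (by simpa using (Ne.symm hk)),
          Finset.card_singleton]
      refine ⟨⟨mkFace u j k, hcard⟩, ?_, rfl⟩
      rw [mem_faceSet]
      intro w hw
      rw [Sym2.mem_iff] at hw
      rcases hw with hw | hw
      · rw [hw]; exact inFace_mkFace_self u j k
      · rw [hw]; exact inFace_mkFace j k hoff
  have hinj : Set.InjOn (mkFace u j) (Finset.univ.erase j) := by
    intro k hk k' hk' heq
    have := congrFun heq k
    rw [(mkFace_eq_none_iff).mpr (Or.inr rfl)] at this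
    have h2 := mkFace_eq_none_iff.mp this.symm
    rcases h2 with h | h
    · exact absurd h (by simpa using hk)
    · exact h
  calc (faceSet (s(u, v))).card
      = ((faceSet (s(u, v))).image Subtype.val).card :=
        (Finset.card_image_of_injective _ Subtype.val_injective).symm
    _ = ((Finset.univ.erase j).image (mkFace u j)).card := by rw [hval]
    _ = (Finset.univ.erase j).card := Finset.card_image_of_injOn hinj
    _ = n - 1 := by rw [Finset.card_erase_of_mem (Finset.mem_univ j)]; simp


lemma edgeDeg_eq (ω : TwoFace n → Bool) (e : Sym2 (Fin n → Bool)) :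
    edgeDeg n ω e = ((faceSet e).filter fun x => ω x = true).card := by
  unfold edgeDeg faceSet
  rw [Finset.filter_filter]
  congr 1
  ext x
  simp [and_comm]

/-- Vertices of a face. -/
noncomputable def vertexSet (c : Fin n → Option Bool) : Finset (Fin n → Bool) :=
  Finset.univ.filter fun v => inFace c v

lemma vertexSet_card (c : ThreeFace n) : (vertexSet c.1).card ≤ 8 := by
  have h3 : (freeSet c.1).card = 3 := c.2
  have := Finset.card_le_card_of_injOn
    (s := vertexSet c.1) (f := fun v : Fin n → Bool => (fun i : {i // i ∈ freeSet c.1} => v i.1))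
    (t := (Finset.univ : Finset ({i // i ∈ freeSet c.1} → Bool)))
    (fun v _ => Finset.mem_univ _) ?_
  · refine this.trans ?_
    rw [Finset.card_univ, Fintype.card_fun, Fintype.card_bool, Fintype.card_coe, h3]
    norm_num
  · intro a ha b hb hab
    simp only [vertexSet, Finset.coe_filter, Set.mem_setOf_eq] at ha hb
    funext i
    by_cases hi : i ∈ freeSet c.1
    · exact congrFun hab ⟨i, hi⟩
    · rw [mem_freeSet] at hi
      cases hc : c.1 i with
      | none => exact absurd hc hi
      | some β => rw [ha.2 i β hc, hb.2 i β hc]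

/-- Edges of the cube lying in a face. -/
noncomputable def edgesIn (n : ℕ) (c : Fin n → Option Bool) : Finset (Sym2 (Fin n → Bool)) :=
  (cubeGraph n).edgeFinset.filter fun e => ∀ v ∈ e, inFace c v

lemma edgesIn_card (c : ThreeFace n) : (edgesIn n c.1).card ≤ 64 := by
  have hsub : edgesIn n c.1 ⊆ (vertexSet c.1 ×ˢ vertexSet c.1).image (fun x => s(x.1, x.2)) := by
    intro e he
    simp only [edgesIn, Finset.mem_filter] at he
    induction e using Sym2.ind with
    | _ u v =>
      refine Finset.mem_image.mpr ⟨(u, v), ?_, rfl⟩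
      rw [Finset.mem_product]
      constructor
      · simp only [vertexSet, Finset.mem_filter, Finset.mem_univ, true_and]
        exact he.2 u (Sym2.mem_mk_left u v)
      · simp only [vertexSet, Finset.mem_filter, Finset.mem_univ, true_and]
        exact he.2 v (Sym2.mem_mk_right u v)
  calc (edgesIn n c.1).card ≤ ((vertexSet c.1 ×ˢ vertexSet c.1).image (fun x => s(x.1, x.2))).card :=
        Finset.card_le_card hsub
    _ ≤ (vertexSet c.1 ×ˢ vertexSet c.1).card := Finset.card_image_le
    _ = (vertexSet c.1).card * (vertexSet c.1).card := Finset.card_product _ _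
    _ ≤ 8 * 8 := Nat.mul_le_mul (vertexSet_card c) (vertexSet_card c)

lemma card_threeFace (n : ℕ) : Fintype.card (ThreeFace n) ≤ n ^ 3 * 2 ^ n := by
  classical
  have hinj : Function.Injective (fun x : ThreeFace n =>
      ((⟨freeSet x.1, by
          rw [Finset.mem_powersetCard]
          exact ⟨Finset.subset_univ _, x.2⟩⟩ :
        {s : Finset (Fin n) // s ∈ Finset.powersetCard 3 (Finset.univ : Finset (Fin n))}),
        (fun i => (x.1 i).getD false))) := by
    intro x y hxy
    have h1 : freeSet x.1 = freeSet y.1 := congrArg (Subtype.val ∘ Prod.fst) hxy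
    have h2 : (fun i => (x.1 i).getD false) = (fun i => (y.1 i).getD false) :=
      congrArg Prod.snd hxy
    apply Subtype.ext
    funext i
    by_cases hi : i ∈ freeSet x.1
    · have hi' := hi; rw [h1] at hi'
      rw [mem_freeSet] at hi hi'
      rw [hi, hi']
    · have hi' := hi; rw [h1] at hi'
      rw [mem_freeSet] at hi hi'
      cases hx : x.1 i with
      | none => exact absurd hx hi
      | some bx =>
        cases hy : y.1 i with
        | none => exact absurd hy hi'
        | some by' =>
          have := congrFun h2 i
          rw [hx, hy] at this
          simpa using this
  have := Fintype.card_le_of_injective _ hinj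
  refine this.trans ?_
  rw [Fintype.card_prod, Fintype.card_coe, Finset.card_powersetCard, Finset.card_univ,
    Fintype.card_fin, Fintype.card_fun, Fintype.card_bool, Fintype.card_fin]
  exact Nat.mul_le_mul_right _ (Nat.choose_le_pow n 3)

end Cube
section Prob
variable {n : ℕ} {p : ℝ}

lemma sum_prod_bool {ι : Type*} [Fintype ι] [DecidableEq ι] (g : ι → Bool → ℝ) :
    ∑ ω : ι → Bool, ∏ i, g i (ω i) = ∏ i, (g i true + g i false) := by
  rw [← Fintype.prod_sum fun i b => g i b]
  exact Finset.prod_congr rfl fun i _ => by simp [Fintype.sum_bool]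

lemma faceProb_nonneg (hp0 : 0 ≤ p) (hp1 : p ≤ 1) (ω : TwoFace n → Bool) :
    0 ≤ faceProb n p ω :=
  Finset.prod_nonneg fun x _ => by by_cases h : ω x <;> simp [h, hp0, hp1] <;> linarith

lemma sum_faceProb : ∑ ω : TwoFace n → Bool, faceProb n p ω = 1 := by
  unfold faceProb
  rw [show (fun ω : TwoFace n → Bool => ∏ x : TwoFace n, if ω x then p else 1 - p)
      = fun ω => ∏ x : TwoFace n, (fun b => if b then p else 1 - p) (ω x) from rfl] at *
  rw [sum_prod_bool (g := fun _ b => if b then p else 1 - p)]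
  simp

lemma sum_absent (hp1 : p ≤ 1) (S : Finset (TwoFace n)) :
    ∑ ω ∈ Finset.univ.filter (fun ω : TwoFace n → Bool => ∀ x ∈ S, ω x = false),
      faceProb n p ω = (1 - p) ^ S.card := by
  classical
  set g : TwoFace n → Bool → ℝ := fun x b =>
    if b then (if x ∈ S then 0 else p) else 1 - p with hg
  have key : ∀ ω : TwoFace n → Bool,
      (if (∀ x ∈ S, ω x = false) then faceProb n p ω else 0) = ∏ x, g x (ω x) := by
    intro ω
    by_cases h : ∀ x ∈ S, ω x = false
    · rw [if_pos h]
      refine Finset.prod_congr rfl fun x _ => ?_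
      by_cases hx : x ∈ S
      · simp [g, h x hx]
      · by_cases hωx : ω x <;> simp [g, hx, hωx]
    · rw [if_neg h]
      push_neg at h
      obtain ⟨x, hxS, hx⟩ := h
      refine (Finset.prod_eq_zero (Finset.mem_univ x) ?_).symm
      simp only [Bool.not_eq_false] at hx
      simp [g, hx, hxS]
  rw [Finset.sum_filter]
  calc ∑ ω : TwoFace n → Bool, (if (∀ x ∈ S, ω x = false) then faceProb n p ω else 0)
      = ∑ ω : TwoFace n → Bool, ∏ x, g x (ω x) := Finset.sum_congr rfl fun ω _ => key ω
    _ = ∏ x : TwoFace n, (g x true + g x false) := sum_prod_bool g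
    _ = ∏ x : TwoFace n, (if x ∈ S then 1 - p else 1) := by
        refine Finset.prod_congr rfl fun x _ => ?_
        by_cases hx : x ∈ S <;> simp [g, hx]
    _ = (1 - p) ^ S.card := by
        rw [Finset.prod_ite_mem Finset.univ S fun _ => (1 - p)]
        simp [Finset.univ_inter, Finset.prod_const]

end Prob

lemma union_bound {α : Type*} [Fintype α] {ι : Type*} [DecidableEq ι] (w : α → ℝ)
    (hw : ∀ a, 0 ≤ w a) (P : α → Prop) [DecidablePred P] (I : Finset ι) (Q : ι → α → Prop)
    [∀ i, DecidablePred (Q i)] (h : ∀ a, P a → ∃ i ∈ I, Q i a) :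
    ∑ a ∈ Finset.univ.filter P, w a ≤ ∑ i ∈ I, ∑ a ∈ Finset.univ.filter (Q i), w a := by
  simp only [Finset.sum_filter]
  rw [Finset.sum_comm]
  refine Finset.sum_le_sum fun a _ => ?_
  have hnn : ∀ i : ι, (0:ℝ) ≤ if Q i a then w a else 0 := fun i => by
    by_cases hQ : Q i a <;> simp [hQ, hw a]
  by_cases hPa : P a
  · obtain ⟨i₀, hi₀, hQ⟩ := h a hPa
    calc (if P a then w a else 0) = (if Q i₀ a then w a else 0) := by simp [hPa, hQ]
      _ ≤ ∑ i ∈ I, (if Q i a then w a else 0) :=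
        Finset.single_le_sum (f := fun i => if Q i a then w a else 0) (fun i _ => hnn i) hi₀
  · simp only [hPa, if_false]
    exact Finset.sum_nonneg fun i _ => hnn i

set_option maxHeartbeats 1000000 in
open scoped Classical in
theorem no_close_light_edges_whp (p : ℝ) (hp : 1 - Real.sqrt (1 / 2) < p) (hp1 : p ≤ 1)
    (M : ℕ) :
    Filter.Tendsto
      (fun n : ℕ =>
        ∑ ω ∈ Finset.univ.filter fun ω : TwoFace n → Bool =>
            ∀ c : ThreeFace n, ∀ e₁ ∈ (cubeGraph n).edgeFinset,
              ∀ e₂ ∈ (cubeGraph n).edgeFinset, e₁ ≠ e₂ →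
              (∀ v, v ∈ e₁ → inFace c.1 v) → (∀ v, v ∈ e₂ → inFace c.1 v) →
              ¬ (edgeDeg n ω e₁ ≤ M ∧ edgeDeg n ω e₂ ≤ M),
          faceProb n p ω)
      Filter.atTop (nhds 1) := by
  have hs1 : Real.sqrt (1 / 2) < 1 := by
    rw [show (1:ℝ) = Real.sqrt 1 from (Real.sqrt_one).symm]
    exact Real.sqrt_lt_sqrt (by norm_num) (by norm_num)
  have hp0 : 0 < p := by linarith
  have hq0 : (0:ℝ) ≤ 1 - p := by linarith
  have hqlt : 1 - p < Real.sqrt (1 / 2) := by linarith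
  set q : ℝ := max (1 - p) (1 / 2) with hqdef
  have hq05 : (1/2 : ℝ) ≤ q := le_max_right _ _
  have hqpos : (0:ℝ) < q := lt_of_lt_of_le (by norm_num) hq05
  have hhalf : (1/2 : ℝ) < Real.sqrt (1 / 2) := by
    have h := Real.sq_sqrt (by norm_num : (0:ℝ) ≤ 1/2)
    nlinarith [Real.sqrt_nonneg (1/2 : ℝ)]
  have hqlt2 : q < Real.sqrt (1 / 2) := max_lt hqlt hhalf
  have hq2 : q ^ 2 < 1 / 2 := by
    have h := Real.sq_sqrt (by norm_num : (0:ℝ) ≤ 1/2)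
    nlinarith [hqpos]
  have hr1 : 2 * q ^ 2 < 1 := by linarith
  have hr0 : (0:ℝ) ≤ 2 * q ^ 2 := by positivity
  have hqle : 1 - p ≤ q := le_max_left _ _
  set a : ℕ := 2 * M + 3 with hadef
  set g : ℕ → ℝ := fun n => (4096 * 2 ^ a * 2 ^ a) * ((n:ℝ) ^ (3 + a) * (2 * q ^ 2) ^ n)
    with hgdef
  have hgnn : ∀ n, 0 ≤ g n := fun n => by positivity
  have hgto : Filter.Tendsto g Filter.atTop (nhds 0) := by
    rw [show (0:ℝ) = (4096 * 2 ^ a * 2 ^ a) * 0 from (mul_zero _).symm]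
    exact (tendsto_pow_const_mul_const_pow_of_lt_one (3 + a) hr0 hr1).const_mul _
  -- the key estimate
  have key : ∀ n : ℕ, 2 * M + 4 ≤ n →
      ∑ ω ∈ Finset.univ.filter fun ω : TwoFace n → Bool =>
          ¬ (∀ c : ThreeFace n, ∀ e₁ ∈ (cubeGraph n).edgeFinset,
              ∀ e₂ ∈ (cubeGraph n).edgeFinset, e₁ ≠ e₂ →
              (∀ v, v ∈ e₁ → inFace c.1 v) → (∀ v, v ∈ e₂ → inFace c.1 v) →
              ¬ (edgeDeg n ω e₁ ≤ M ∧ edgeDeg n ω e₂ ≤ M)),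
        faceProb n p ω ≤ g n := by
    intro n hn
    have hwnn := faceProb_nonneg (n := n) hp0.le hp1
    -- Step 1: union bound over admissible triples
    set A : Finset (ThreeFace n × Sym2 (Fin n → Bool) × Sym2 (Fin n → Bool)) :=
      Finset.univ.filter fun z =>
        z.2.1 ∈ edgesIn n z.1.1 ∧ z.2.2 ∈ edgesIn n z.1.1 ∧ z.2.1 ≠ z.2.2 with hAdef
    have step1 := union_bound (faceProb n p) hwnn
      (fun ω : TwoFace n → Bool =>
        ¬ (∀ c : ThreeFace n, ∀ e₁ ∈ (cubeGraph n).edgeFinset,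
            ∀ e₂ ∈ (cubeGraph n).edgeFinset, e₁ ≠ e₂ →
            (∀ v, v ∈ e₁ → inFace c.1 v) → (∀ v, v ∈ e₂ → inFace c.1 v) →
            ¬ (edgeDeg n ω e₁ ≤ M ∧ edgeDeg n ω e₂ ≤ M))) A
      (fun z ω => edgeDeg n ω z.2.1 ≤ M ∧ edgeDeg n ω z.2.2 ≤ M) ?_
    swap
    · intro ω hω
      push_neg at hω
      obtain ⟨c, e₁, he₁, e₂, he₂, hne, hi₁, hi₂, hl⟩ := hω
      refine ⟨(c, e₁, e₂), ?_, hl⟩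
      rw [hAdef, Finset.mem_filter]
      refine ⟨Finset.mem_univ _, ?_, ?_, hne⟩
      · rw [edgesIn, Finset.mem_filter]; exact ⟨he₁, hi₁⟩
      · rw [edgesIn, Finset.mem_filter]; exact ⟨he₂, hi₂⟩
    refine le_trans step1 ?_
    -- Step 2: bound each term
    have step2 : ∀ z ∈ A,
        (∑ ω ∈ Finset.univ.filter fun ω : TwoFace n → Bool =>
            edgeDeg n ω z.2.1 ≤ M ∧ edgeDeg n ω z.2.2 ≤ M, faceProb n p ω)
          ≤ ((2 * n).choose a : ℝ) * q ^ (2 * n - a) := by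
      rintro ⟨c, e₁, e₂⟩ hz
      rw [hAdef, Finset.mem_filter] at hz
      obtain ⟨-, hz₁, hz₂, hzne⟩ := hz
      rw [edgesIn, Finset.mem_filter] at hz₁ hz₂
      have hF₁ : (faceSet e₁).card = n - 1 := by
        obtain ⟨u, v, j, rfl, hj, hoff⟩ := edge_normal hz₁.1
        exact faceSet_card hj hoff
      have hF₂ : (faceSet e₂).card = n - 1 := by
        obtain ⟨u, v, j, rfl, hj, hoff⟩ := edge_normal hz₂.1
        exact faceSet_card hj hoff
      have hint : (faceSet e₁ ∩ faceSet e₂).card ≤ 1 := faceSet_inter_card hz₁.1 hz₂.1 hzne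
      set U : Finset (TwoFace n) := faceSet e₁ ∪ faceSet e₂ with hUdef
      have hUc : U.card + (faceSet e₁ ∩ faceSet e₂).card = (n-1) + (n-1) := by
        rw [hUdef, Finset.card_union_add_card_inter, hF₁, hF₂]
      have hUle : U.card ≤ 2 * n := by omega
      have cover : ∀ ω : TwoFace n → Bool,
          (edgeDeg n ω e₁ ≤ M ∧ edgeDeg n ω e₂ ≤ M) →
          ∃ T ∈ Finset.powersetCard (2 * n - a) U, ∀ x ∈ T, ω x = false := by
        intro ω hω
        rw [edgeDeg_eq] at hω
        obtain ⟨hω₁, hω₂⟩ := hω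
        rw [edgeDeg_eq] at hω₂
        have hsplit : (U.filter fun x => ω x = true).card
            + (U.filter fun x => ω x = false).card = U.card := by
          rw [show (U.filter fun x => ω x = false)
              = (U.filter fun x => ¬ (ω x = true)) from
            Finset.filter_congr fun x _ => by simp]
          exact Finset.card_filter_add_card_filter_not _
        have hpres : (U.filter fun x => ω x = true).card ≤ M + M := by
          rw [hUdef, Finset.filter_union]
          refine le_trans (Finset.card_union_le _ _) ?_
          exact Nat.add_le_add hω₁ hω₂
        have habs : 2 * n - a ≤ (U.filter fun x => ω x = false).card := by omega
        obtain ⟨T, hT1, hT2⟩ := Finset.exists_subset_card_eq habs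
        refine ⟨T, Finset.mem_powersetCard.mpr
          ⟨hT1.trans (Finset.filter_subset _ _), hT2⟩, fun x hx => ?_⟩
        exact (Finset.mem_filter.mp (hT1 hx)).2
      have hub := union_bound (faceProb n p) hwnn
        (fun ω => edgeDeg n ω e₁ ≤ M ∧ edgeDeg n ω e₂ ≤ M)
        (Finset.powersetCard (2 * n - a) U) (fun T ω => ∀ x ∈ T, ω x = false) cover
      refine le_trans hub ?_
      have hterm : ∀ T ∈ Finset.powersetCard (2 * n - a) U,
          (∑ ω ∈ Finset.univ.filter fun ω : TwoFace n → Bool =>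
            ∀ x ∈ T, ω x = false, faceProb n p ω) ≤ q ^ (2 * n - a) := by
        intro T hT
        rw [sum_absent hp1 T, (Finset.mem_powersetCard.mp hT).2]
        exact pow_le_pow_left₀ hq0 hqle _
      refine le_trans (Finset.sum_le_sum hterm) ?_
      rw [Finset.sum_const, nsmul_eq_mul, Finset.card_powersetCard]
      have hqp : (0:ℝ) ≤ q ^ (2 * n - a) := by positivity
      have hcc : (U.card.choose (2 * n - a) : ℝ) ≤ ((2 * n).choose a : ℝ) := by
        have h1 : U.card.choose (2 * n - a) ≤ (2 * n).choose (2 * n - a) :=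
          Nat.choose_le_choose _ hUle
        have h2 : (2 * n).choose (2 * n - a) = (2 * n).choose a :=
          Nat.choose_symm (by omega)
        exact_mod_cast h1.trans_eq h2
      exact mul_le_mul_of_nonneg_right hcc hqp
    refine le_trans (Finset.sum_le_sum step2) ?_
    rw [Finset.sum_const, nsmul_eq_mul]
    -- Step 3: count A
    have hAcard : A.card ≤ Fintype.card (ThreeFace n) * 4096 := by
      have hsub : A ⊆ Finset.univ.biUnion fun c : ThreeFace n =>
          ({c} : Finset (ThreeFace n)) ×ˢ (edgesIn n c.1 ×ˢ edgesIn n c.1) := by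
        rintro ⟨c, e₁, e₂⟩ hz
        rw [hAdef, Finset.mem_filter] at hz
        refine Finset.mem_biUnion.mpr ⟨c, Finset.mem_univ _, ?_⟩
        rw [Finset.mem_product, Finset.mem_product]
        exact ⟨Finset.mem_singleton_self _, hz.2.1, hz.2.2.1⟩
      refine le_trans (Finset.card_le_card hsub) ?_
      refine le_trans (Finset.card_biUnion_le) ?_
      have : ∀ c : ThreeFace n,
          (({c} : Finset (ThreeFace n)) ×ˢ (edgesIn n c.1 ×ˢ edgesIn n c.1)).card ≤ 4096 := by
        intro c
        rw [Finset.card_product, Finset.card_product, Finset.card_singleton, one_mul]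
        calc (edgesIn n c.1).card * (edgesIn n c.1).card ≤ 64 * 64 :=
            Nat.mul_le_mul (edgesIn_card c) (edgesIn_card c)
          _ = 4096 := by norm_num
      refine le_trans (Finset.sum_le_sum fun c _ => this c) ?_
      rw [Finset.sum_const, smul_eq_mul, Finset.card_univ]
    -- final numeric chain
    have hq2n : q ^ (2 * n - a) ≤ 2 ^ a * (q ^ 2) ^ n := by
      have h1 : (1/2:ℝ) ^ a ≤ q ^ a := pow_le_pow_left₀ (by norm_num) hq05 a
      have h2 : q ^ (2 * n - a) * q ^ a = (q ^ 2) ^ n := by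
        rw [← pow_add, ← pow_mul]
        congr 1
        omega
      have h3 : q ^ (2 * n - a) * (1/2:ℝ) ^ a ≤ (q ^ 2) ^ n := by
        calc q ^ (2 * n - a) * (1/2:ℝ) ^ a ≤ q ^ (2 * n - a) * q ^ a :=
            mul_le_mul_of_nonneg_left h1 (by positivity)
          _ = (q ^ 2) ^ n := h2
      have h4 := mul_le_mul_of_nonneg_right h3 (by positivity : (0:ℝ) ≤ 2 ^ a)
      calc q ^ (2 * n - a) = q ^ (2 * n - a) * (1/2:ℝ) ^ a * 2 ^ a := by
            rw [mul_assoc, ← mul_pow]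
            norm_num
        _ ≤ (q ^ 2) ^ n * 2 ^ a := h4
        _ = 2 ^ a * (q ^ 2) ^ n := mul_comm _ _
    have hN₃ : (Fintype.card (ThreeFace n) : ℝ) ≤ (n:ℝ) ^ 3 * 2 ^ n := by
      have := card_threeFace n
      calc (Fintype.card (ThreeFace n) : ℝ) ≤ ((n ^ 3 * 2 ^ n : ℕ) : ℝ) := by exact_mod_cast this
        _ = (n:ℝ) ^ 3 * 2 ^ n := by push_cast; ring
    have hC : (((2 * n).choose a : ℕ) : ℝ) ≤ (2 * (n:ℝ)) ^ a := by
      calc (((2 * n).choose a : ℕ) : ℝ) ≤ (((2 * n) ^ a : ℕ) : ℝ) := by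
            exact_mod_cast Nat.choose_le_pow (2 * n) a
        _ = (2 * (n:ℝ)) ^ a := by push_cast; ring
    have hAR : (A.card : ℝ) ≤ (Fintype.card (ThreeFace n) : ℝ) * 4096 := by
      exact_mod_cast hAcard
    calc (A.card : ℝ) * (((2 * n).choose a : ℝ) * q ^ (2 * n - a))
        ≤ ((n:ℝ) ^ 3 * 2 ^ n * 4096) * ((2 * (n:ℝ)) ^ a * (2 ^ a * (q ^ 2) ^ n)) := by
          have hnn1 : (0:ℝ) ≤ ((2 * n).choose a : ℝ) * q ^ (2 * n - a) := by positivity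
          refine mul_le_mul (hAR.trans (mul_le_mul_of_nonneg_right hN₃ (by norm_num))) ?_ hnn1 (by positivity)
          exact mul_le_mul hC hq2n (by positivity) (by positivity)
      _ = g n := by rw [hgdef]; push_cast; ring
  -- conclude by squeezing
  have hupper : ∀ n : ℕ,
      (∑ ω ∈ Finset.univ.filter fun ω : TwoFace n → Bool =>
          ∀ c : ThreeFace n, ∀ e₁ ∈ (cubeGraph n).edgeFinset,
            ∀ e₂ ∈ (cubeGraph n).edgeFinset, e₁ ≠ e₂ →
            (∀ v, v ∈ e₁ → inFace c.1 v) → (∀ v, v ∈ e₂ → inFace c.1 v) →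
            ¬ (edgeDeg n ω e₁ ≤ M ∧ edgeDeg n ω e₂ ≤ M),
        faceProb n p ω) ≤ 1 := by
    intro n
    calc _ ≤ ∑ ω : TwoFace n → Bool, faceProb n p ω :=
        Finset.sum_le_sum_of_subset_of_nonneg (Finset.filter_subset _ _)
          (fun ω _ _ => faceProb_nonneg hp0.le hp1 ω)
      _ = 1 := sum_faceProb
  have hlower : ∀ n : ℕ, 2 * M + 4 ≤ n →
      1 - g n ≤ ∑ ω ∈ Finset.univ.filter fun ω : TwoFace n → Bool =>
          ∀ c : ThreeFace n, ∀ e₁ ∈ (cubeGraph n).edgeFinset,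
            ∀ e₂ ∈ (cubeGraph n).edgeFinset, e₁ ≠ e₂ →
            (∀ v, v ∈ e₁ → inFace c.1 v) → (∀ v, v ∈ e₂ → inFace c.1 v) →
            ¬ (edgeDeg n ω e₁ ≤ M ∧ edgeDeg n ω e₂ ≤ M),
        faceProb n p ω := by
    intro n hn
    have hsplit := Finset.sum_filter_add_sum_filter_not Finset.univ
      (fun ω : TwoFace n → Bool =>
        ∀ c : ThreeFace n, ∀ e₁ ∈ (cubeGraph n).edgeFinset,
          ∀ e₂ ∈ (cubeGraph n).edgeFinset, e₁ ≠ e₂ →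
          (∀ v, v ∈ e₁ → inFace c.1 v) → (∀ v, v ∈ e₂ → inFace c.1 v) →
          ¬ (edgeDeg n ω e₁ ≤ M ∧ edgeDeg n ω e₂ ≤ M)) (faceProb n p)
    rw [sum_faceProb] at hsplit
    have := key n hn
    linarith
  have h1 : Filter.Tendsto (fun n : ℕ => 1 - g n) Filter.atTop (nhds 1) := by
    have h2 : Filter.Tendsto (fun n : ℕ => 1 - g n) Filter.atTop (nhds (1 - 0)) :=
      tendsto_const_nhds.sub hgto
    simpa using h2
  refine tendsto_of_tendsto_of_tendsto_of_le_of_le' h1 tendsto_const_nhds ?_ ?_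
  · filter_upwards [Filter.eventually_atTop.mpr ⟨2 * M + 4, fun n hn => hn⟩] with n hn
    exact hlower n hn
  · filter_upwards with n
    exact hupper n
end

section
/- If two parallel 2-faces x and y of a cubical complex Q ⊆ Q^n_2 are 'related' — meaning the unique 3-cube containing them has its other four boundary 4-cycles all filled by 2-faces of Q — then the boundary 4-cycles of x and y are homotopic (edge-equivalent) in Q. -/
open Finset SimpleGraph

/-- `x` is a subface of `c` (star notation). -/
def subFace {n : ℕ} (x c : Fin n → Option Bool) : Prop :=
  (∀ i, x i = none → c i = none) ∧ ∀ i b, c i = some b → x i = some b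

/-- Edge-equivalence (combinatorial homotopy) of edge-paths in a cubical complex with
1-skeleton `G` and set of filled 2-faces `F`: the equivalence relation on walks generated
by (i) replacing a segment lying in a filled square by another segment in that square with
the same endpoints (this subsumes the moves replacing two consecutive edges of a filled
4-cycle by the opposite two, one edge by the complementary three, or three by one), and
(ii) cancelling an edge traversed twice consecutively. -/
inductive EdgeEquiv {n : ℕ} (G : SimpleGraph (Fin n → Bool)) (F : TwoFace n → Prop) :
    ∀ {u v : Fin n → Bool}, G.Walk u v → G.Walk u v → Prop
  | refl {u v} (w : G.Walk u v) : EdgeEquiv G F w w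
  | symm {u v} {w₁ w₂ : G.Walk u v} : EdgeEquiv G F w₁ w₂ → EdgeEquiv G F w₂ w₁
  | trans {u v} {w₁ w₂ w₃ : G.Walk u v} :
      EdgeEquiv G F w₁ w₂ → EdgeEquiv G F w₂ w₃ → EdgeEquiv G F w₁ w₃
  | square {a b u v : Fin n → Bool} (x : TwoFace n) (hx : F x)
      (w₁ w₂ : G.Walk a b)
      (h₁ : ∀ z ∈ w₁.support, inFace x.1 z) (h₂ : ∀ z ∈ w₂.support, inFace x.1 z)
      (p : G.Walk u a) (q : G.Walk b v) :
      EdgeEquiv G F (p.append (w₁.append q)) (p.append (w₂.append q))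
  | backtrack {a b u v : Fin n → Bool} (h : G.Adj a b) (p : G.Walk u a) (q : G.Walk a v) :
      EdgeEquiv G F
        (p.append ((Walk.cons h (Walk.cons h.symm Walk.nil)).append q)) (p.append q)

/-- If two parallel 2-faces `x` and `y` of a cubical complex (with full 1-skeleton and
filled faces `F`) are *related* — the unique 3-cube containing them has its other four
boundary 4-cycles all filled — then the boundary 4-cycle of `x` is edge-equivalent
(homotopic) to the boundary 4-cycle of `y` (conjugated by a connecting edge). -/
theorem related_faces_homotopic (n : ℕ) (F : TwoFace n → Prop) (x y : TwoFace n)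
    (hstar : ∀ i, x.1 i = none ↔ y.1 i = none)
    (hdist : (Finset.univ.filter fun i => x.1 i ≠ y.1 i).card = 1)
    (hrel : ∃ c : ThreeFace n, subFace x.1 c.1 ∧ subFace y.1 c.1 ∧
      ∀ z : TwoFace n, subFace z.1 c.1 → z ≠ x → z ≠ y → F z)
    (a : Fin n → Bool) (ha : inFace x.1 a)
    (wx : (cubeGraph n).Walk a a)
    (hwx : wx.IsCycle ∧ wx.length = 4 ∧ ∀ z ∈ wx.support, inFace x.1 z) :
    ∃ (b : Fin n → Bool) (hab : (cubeGraph n).Adj a b) (wy : (cubeGraph n).Walk b b),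
      (wy.IsCycle ∧ wy.length = 4 ∧ ∀ z ∈ wy.support, inFace y.1 z) ∧
      EdgeEquiv (cubeGraph n) F wx
        (Walk.cons hab (wy.append (Walk.cons hab.symm Walk.nil))) := by
  classical
  obtain ⟨hcyc, hlen, hsupx⟩ := hwx
  obtain ⟨c, hxc, hyc, hF⟩ := hrel
  obtain ⟨k, hk⟩ := Finset.card_eq_one.mp hdist
  have hkuniq : ∀ j, x.1 j ≠ y.1 j ↔ j = k := by
    intro j
    constructor
    · intro h
      have : j ∈ (Finset.univ.filter fun i => x.1 i ≠ y.1 i) :=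
        Finset.mem_filter.mpr ⟨Finset.mem_univ j, h⟩
      rw [hk] at this
      simpa using this
    · intro hjk
      have : j ∈ (Finset.univ.filter fun i => x.1 i ≠ y.1 i) := by
        rw [hk, Finset.mem_singleton]; exact hjk
      exact (Finset.mem_filter.mp this).2
  have hkne : x.1 k ≠ y.1 k := (hkuniq k).mpr rfl
  have heqj : ∀ j, j ≠ k → x.1 j = y.1 j := by
    intro j hj
    by_contra h
    exact hj ((hkuniq j).mp h)
  obtain ⟨bk, hxk, hyk⟩ : ∃ bk, x.1 k = some bk ∧ y.1 k = some (!bk) := by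
    cases hxkc : x.1 k with
    | none =>
      exact absurd (hxkc.trans ((hstar k).mp hxkc).symm) hkne
    | some b =>
      cases hykc : y.1 k with
      | none =>
        have := (hstar k).mpr hykc
        rw [hxkc] at this; cases this
      | some b' =>
        refine ⟨b, rfl, ?_⟩
        have hbb : b ≠ b' := by
          intro h; rw [h] at hxkc; exact hkne (hxkc.trans hykc.symm)
        cases b <;> cases b' <;> simp_all
  -- the flip map
  set φ : (Fin n → Bool) → (Fin n → Bool) := fun v => Function.update v k (!v k) with hφdef
  have hφeval : ∀ v j, φ v j = if j = k then !v k else v j := by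
    intro v j
    show Function.update v k (!v k) j = _
    by_cases h : j = k
    · rw [if_pos h, h, Function.update_self]
    · rw [if_neg h, Function.update_of_ne h]
  have hφadj : ∀ u v, (cubeGraph n).Adj u v → (cubeGraph n).Adj (φ u) (φ v) := by
    intro u v h
    show (Finset.univ.filter fun i => φ u i ≠ φ v i).card = 1
    have : (Finset.univ.filter fun i => φ u i ≠ φ v i)
        = (Finset.univ.filter fun i => u i ≠ v i) := by
      apply Finset.filter_congr
      intro i _
      rw [hφeval, hφeval]
      by_cases hik : i = k
      · subst hik; simp
      · simp [hik]
    rw [this]; exact h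
  have hφinv : ∀ v, φ (φ v) = v := by
    intro v
    funext j
    rw [hφeval]
    by_cases h : j = k
    · rw [if_pos h, hφeval, if_pos rfl, Bool.not_not, h]
    · rw [if_neg h, hφeval, if_neg h]
  have hφinj : Function.Injective φ := Function.LeftInverse.injective hφinv
  have hadjφ : ∀ v, (cubeGraph n).Adj v (φ v) := by
    intro v
    show (Finset.univ.filter fun i => v i ≠ φ v i).card = 1
    have : (Finset.univ.filter fun i => v i ≠ φ v i) = {k} := by
      ext j
      rw [Finset.mem_filter, Finset.mem_singleton]
      rw [hφeval]
      by_cases h : j = k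
      · subst h; simp
      · simp [h]
    rw [this]; simp
  have hφface : ∀ u, inFace x.1 u → inFace y.1 (φ u) := by
    intro u hu i b hib
    rw [hφeval]
    by_cases h : i = k
    · rw [if_pos h, hu k bk hxk]
      rw [h, hyk] at hib
      exact Option.some.inj hib
    · rw [if_neg h]
      exact hu i b ((heqj i h).trans hib)
  -- facts about the 3-face c
  have hck : c.1 k = none := by
    cases h : c.1 k with
    | none => rfl
    | some b => exact absurd ((hxc.2 k b h).trans (hyc.2 k b h).symm) hkne
  have hkS : k ∉ Finset.univ.filter (fun j => x.1 j = none) := by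
    simp [hxk]
  have hcS : ∀ j, c.1 j = none ↔ (x.1 j = none ∨ j = k) := by
    have hsub : insert k (Finset.univ.filter fun j => x.1 j = none)
        ⊆ Finset.univ.filter (fun j => c.1 j = none) := by
      intro j hj
      rw [Finset.mem_insert] at hj
      rcases hj with rfl | hj
      · exact Finset.mem_filter.mpr ⟨Finset.mem_univ j, hck⟩
      · exact Finset.mem_filter.mpr ⟨Finset.mem_univ j, hxc.1 j (Finset.mem_filter.mp hj).2⟩
    have hcard : (insert k (Finset.univ.filter fun j => x.1 j = none)).card = 3 := by
      rw [Finset.card_insert_of_notMem hkS, x.2]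
    have heqS : insert k (Finset.univ.filter fun j => x.1 j = none)
        = Finset.univ.filter (fun j => c.1 j = none) :=
      Finset.eq_of_subset_of_card_le hsub (by rw [c.2, hcard])
    intro j
    constructor
    · intro h
      have : j ∈ insert k (Finset.univ.filter fun j => x.1 j = none) := by
        rw [heqS]; exact Finset.mem_filter.mpr ⟨Finset.mem_univ j, h⟩
      rw [Finset.mem_insert, Finset.mem_filter] at this
      tauto
    · intro h
      have : j ∈ insert k (Finset.univ.filter fun j => x.1 j = none) := by
        rw [Finset.mem_insert, Finset.mem_filter]
        rcases h with h | h
        · exact Or.inr ⟨Finset.mem_univ j, h⟩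
        · exact Or.inl h
      rw [heqS] at this
      exact (Finset.mem_filter.mp this).2
  -- key: every edge of the face x spans a filled side square together with its flip
  have key : ∀ u v, (cubeGraph n).Adj u v → inFace x.1 u → inFace x.1 v →
      ∃ z : TwoFace n, F z ∧ inFace z.1 u ∧ inFace z.1 v ∧ inFace z.1 (φ u) ∧
        inFace z.1 (φ v) := by
    intro u v h hu hv
    have hukvk : u k = v k := (hu k bk hxk).trans (hv k bk hxk).symm
    obtain ⟨e, he⟩ := Finset.card_eq_one.mp h
    have huve : u e ≠ v e := by
      have : e ∈ Finset.univ.filter fun i => u i ≠ v i := by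
        rw [he]; exact Finset.mem_singleton_self e
      exact (Finset.mem_filter.mp this).2
    have hek : e ≠ k := by
      intro hek; rw [hek] at huve; exact huve hukvk
    have huvj : ∀ j, j ≠ e → u j = v j := by
      intro j hj
      by_contra hne
      have : j ∈ Finset.univ.filter fun i => u i ≠ v i :=
        Finset.mem_filter.mpr ⟨Finset.mem_univ j, hne⟩
      rw [he, Finset.mem_singleton] at this
      exact hj this
    have hxe : x.1 e = none := by
      cases hb : x.1 e with
      | none => rfl
      | some b => exact absurd ((hu e b hb).trans (hv e b hb).symm) huve
    set zf : Fin n → Option Bool := fun j => if j = k ∨ j = e then none else some (u j)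
      with hzf
    have hzcard : (Finset.univ.filter fun j => zf j = none).card = 2 := by
      have : (Finset.univ.filter fun j => zf j = none) = {k, e} := by
        ext j
        rw [Finset.mem_filter, Finset.mem_insert, Finset.mem_singleton]
        simp only [hzf]
        by_cases hj : j = k ∨ j = e
        · simp [hj]
        · simp [hj]
      rw [this]
      rw [Finset.card_insert_of_notMem (by simpa using hek.symm)]
      simp
    refine ⟨⟨zf, hzcard⟩, hF _ ⟨?_, ?_⟩ ?_ ?_, ?_, ?_, ?_, ?_⟩
    · intro j hj
      simp only [hzf] at hj
      by_cases hjke : j = k ∨ j = e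
      · rcases hjke with rfl | rfl
        · exact hck
        · exact (hcS j).mpr (Or.inl hxe)
      · rw [if_neg hjke] at hj; cases hj
    · intro j b hj
      have hxj : x.1 j = some b := hxc.2 j b hj
      have hjk : j ≠ k := by rintro rfl; rw [hck] at hj; cases hj
      have hje : j ≠ e := by rintro rfl; rw [hxe] at hxj; cases hxj
      simp only [hzf]
      rw [if_neg (by tauto), hu j b hxj]
    · intro hzx
      have h2 : zf k = x.1 k := congrArg (fun w => w.1 k) hzx
      rw [hxk] at h2
      simp [hzf] at h2
    · intro hzy
      have h2 : zf k = y.1 k := congrArg (fun w => w.1 k) hzy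
      rw [hyk] at h2
      simp [hzf] at h2
    · intro j b hj
      simp only [hzf] at hj
      by_cases hjke : j = k ∨ j = e
      · rw [if_pos hjke] at hj; cases hj
      · rw [if_neg hjke] at hj; exact Option.some.inj hj
    · intro j b hj
      simp only [hzf] at hj
      by_cases hjke : j = k ∨ j = e
      · rw [if_pos hjke] at hj; cases hj
      · rw [if_neg hjke] at hj
        rw [← huvj j (by tauto), Option.some.inj hj]
    · intro j b hj
      simp only [hzf] at hj
      by_cases hjke : j = k ∨ j = e
      · rw [if_pos hjke] at hj; cases hj
      · rw [if_neg hjke] at hj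
        rw [hφeval, if_neg (by tauto), Option.some.inj hj]
    · intro j b hj
      simp only [hzf] at hj
      by_cases hjke : j = k ∨ j = e
      · rw [if_pos hjke] at hj; cases hj
      · rw [if_neg hjke] at hj
        rw [hφeval, if_neg (by tauto), ← huvj j (by tauto), Option.some.inj hj]
  -- decompose the 4-cycle
  cases wx with
  | nil => exact absurd hlen (by simp [SimpleGraph.Walk.length_nil])
  | cons h1 p =>
    rename_i v1
    cases p with
    | nil =>
      exfalso
      simp only [SimpleGraph.Walk.length_cons, SimpleGraph.Walk.length_nil] at hlen
      omega
    | cons h2 p =>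
      rename_i v2
      cases p with
      | nil =>
        exfalso
        simp only [SimpleGraph.Walk.length_cons, SimpleGraph.Walk.length_nil] at hlen
        omega
      | cons h3 p =>
        rename_i v3
        cases p with
        | nil =>
          exfalso
          simp only [SimpleGraph.Walk.length_cons, SimpleGraph.Walk.length_nil] at hlen
          omega
        | cons h4 p =>
          cases p with
          | cons h5 p =>
            exfalso
            simp only [SimpleGraph.Walk.length_cons, SimpleGraph.Walk.length_nil] at hlen
            omega
          | nil =>
            have hm1 : inFace x.1 v1 := hsupx v1 (by simp [SimpleGraph.Walk.support_cons])
            have hm2 : inFace x.1 v2 := hsupx v2 (by simp [SimpleGraph.Walk.support_cons])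
            have hm3 : inFace x.1 v3 := hsupx v3 (by simp [SimpleGraph.Walk.support_cons])
            obtain ⟨z1, hz1F, hz11, hz12, hz13, hz14⟩ := key a v1 h1 ha hm1
            obtain ⟨z2, hz2F, hz21, hz22, hz23, hz24⟩ := key v1 v2 h2 hm1 hm2
            obtain ⟨z3, hz3F, hz31, hz32, hz33, hz34⟩ := key v2 v3 h3 hm2 hm3
            obtain ⟨z4, hz4F, hz41, hz42, hz43, hz44⟩ := key v3 a h4 hm3 ha
            have f0 := hadjφ a
            have f1 := hadjφ v1
            have f2 := hadjφ v2
            have f3 := hadjφ v3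
            have e1' := hφadj a v1 h1
            have e2' := hφadj v1 v2 h2
            have e3' := hφadj v2 v3 h3
            have e4' := hφadj v3 a h4
            have φh : cubeGraph n →g cubeGraph n := ⟨φ, fun h => hφadj _ _ h⟩
            refine ⟨φ a, f0,
              Walk.map ⟨φ, fun h => hφadj _ _ h⟩
                (Walk.cons h1 (Walk.cons h2 (Walk.cons h3 (Walk.cons h4 Walk.nil)))),
              ⟨?_, ?_, ?_⟩, ?_⟩
            · exact hcyc.map (f := ⟨φ, fun h => hφadj _ _ h⟩) hφinj
            · simp [SimpleGraph.Walk.length_map, SimpleGraph.Walk.length_cons]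
            · intro z hz
              rw [SimpleGraph.Walk.support_map, List.mem_map] at hz
              obtain ⟨u, hu, rfl⟩ := hz
              exact hφface u (hsupx u hu)
            · -- the homotopy chain
              have sup1a : ∀ w ∈ (Walk.cons h1 Walk.nil).support, inFace z1.1 w := by
                intro w hw
                simp [SimpleGraph.Walk.support_cons, SimpleGraph.Walk.support_nil] at hw
                rcases hw with rfl | rfl
                exacts [hz11, hz12]
              have sup1b : ∀ w ∈ (Walk.cons f0 (Walk.cons e1'
                  (Walk.cons f1.symm Walk.nil))).support, inFace z1.1 w := by
                intro w hw
                simp [SimpleGraph.Walk.support_cons, SimpleGraph.Walk.support_nil] at hw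
                rcases hw with rfl | rfl | rfl | rfl
                exacts [hz11, hz13, hz14, hz12]
              have sup2a : ∀ w ∈ (Walk.cons h2 Walk.nil).support, inFace z2.1 w := by
                intro w hw
                simp [SimpleGraph.Walk.support_cons, SimpleGraph.Walk.support_nil] at hw
                rcases hw with rfl | rfl
                exacts [hz21, hz22]
              have sup2b : ∀ w ∈ (Walk.cons f1 (Walk.cons e2'
                  (Walk.cons f2.symm Walk.nil))).support, inFace z2.1 w := by
                intro w hw
                simp [SimpleGraph.Walk.support_cons, SimpleGraph.Walk.support_nil] at hw
                rcases hw with rfl | rfl | rfl | rfl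
                exacts [hz21, hz23, hz24, hz22]
              have sup3a : ∀ w ∈ (Walk.cons h3 Walk.nil).support, inFace z3.1 w := by
                intro w hw
                simp [SimpleGraph.Walk.support_cons, SimpleGraph.Walk.support_nil] at hw
                rcases hw with rfl | rfl
                exacts [hz31, hz32]
              have sup3b : ∀ w ∈ (Walk.cons f2 (Walk.cons e3'
                  (Walk.cons f3.symm Walk.nil))).support, inFace z3.1 w := by
                intro w hw
                simp [SimpleGraph.Walk.support_cons, SimpleGraph.Walk.support_nil] at hw
                rcases hw with rfl | rfl | rfl | rfl
                exacts [hz31, hz33, hz34, hz32]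
              have sup4a : ∀ w ∈ (Walk.cons h4 Walk.nil).support, inFace z4.1 w := by
                intro w hw
                simp [SimpleGraph.Walk.support_cons, SimpleGraph.Walk.support_nil] at hw
                rcases hw with rfl | rfl
                exacts [hz41, hz42]
              have sup4b : ∀ w ∈ (Walk.cons f3 (Walk.cons e4'
                  (Walk.cons f0.symm Walk.nil))).support, inFace z4.1 w := by
                intro w hw
                simp [SimpleGraph.Walk.support_cons, SimpleGraph.Walk.support_nil] at hw
                rcases hw with rfl | rfl | rfl | rfl
                exacts [hz41, hz43, hz44, hz42]
              have S1 : EdgeEquiv (cubeGraph n) F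
                  (Walk.cons h1 (Walk.cons h2 (Walk.cons h3 (Walk.cons h4 Walk.nil))))
                  (Walk.cons f0 (Walk.cons e1' (Walk.cons f1.symm
                    (Walk.cons h2 (Walk.cons h3 (Walk.cons h4 Walk.nil)))))) :=
                EdgeEquiv.square z1 hz1F (Walk.cons h1 Walk.nil)
                  (Walk.cons f0 (Walk.cons e1' (Walk.cons f1.symm Walk.nil)))
                  sup1a sup1b Walk.nil
                  (Walk.cons h2 (Walk.cons h3 (Walk.cons h4 Walk.nil)))
              have S2 : EdgeEquiv (cubeGraph n) F
                  (Walk.cons f0 (Walk.cons e1' (Walk.cons f1.symm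
                    (Walk.cons h2 (Walk.cons h3 (Walk.cons h4 Walk.nil))))))
                  (Walk.cons f0 (Walk.cons e1' (Walk.cons f1.symm (Walk.cons f1
                    (Walk.cons e2' (Walk.cons f2.symm
                      (Walk.cons h3 (Walk.cons h4 Walk.nil)))))))) :=
                EdgeEquiv.square z2 hz2F (Walk.cons h2 Walk.nil)
                  (Walk.cons f1 (Walk.cons e2' (Walk.cons f2.symm Walk.nil)))
                  sup2a sup2b
                  (Walk.cons f0 (Walk.cons e1' (Walk.cons f1.symm Walk.nil)))
                  (Walk.cons h3 (Walk.cons h4 Walk.nil))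
              have S3 : EdgeEquiv (cubeGraph n) F
                  (Walk.cons f0 (Walk.cons e1' (Walk.cons f1.symm (Walk.cons f1
                    (Walk.cons e2' (Walk.cons f2.symm
                      (Walk.cons h3 (Walk.cons h4 Walk.nil))))))))
                  (Walk.cons f0 (Walk.cons e1' (Walk.cons f1.symm (Walk.cons f1
                    (Walk.cons e2' (Walk.cons f2.symm (Walk.cons f2 (Walk.cons e3'
                      (Walk.cons f3.symm (Walk.cons h4 Walk.nil)))))))))) :=
                EdgeEquiv.square z3 hz3F (Walk.cons h3 Walk.nil)
                  (Walk.cons f2 (Walk.cons e3' (Walk.cons f3.symm Walk.nil)))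
                  sup3a sup3b
                  (Walk.cons f0 (Walk.cons e1' (Walk.cons f1.symm (Walk.cons f1
                    (Walk.cons e2' (Walk.cons f2.symm Walk.nil))))))
                  (Walk.cons h4 Walk.nil)
              have S4 : EdgeEquiv (cubeGraph n) F
                  (Walk.cons f0 (Walk.cons e1' (Walk.cons f1.symm (Walk.cons f1
                    (Walk.cons e2' (Walk.cons f2.symm (Walk.cons f2 (Walk.cons e3'
                      (Walk.cons f3.symm (Walk.cons h4 Walk.nil))))))))))
                  (Walk.cons f0 (Walk.cons e1' (Walk.cons f1.symm (Walk.cons f1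
                    (Walk.cons e2' (Walk.cons f2.symm (Walk.cons f2 (Walk.cons e3'
                      (Walk.cons f3.symm (Walk.cons f3 (Walk.cons e4'
                        (Walk.cons f0.symm Walk.nil)))))))))))) :=
                EdgeEquiv.square z4 hz4F (Walk.cons h4 Walk.nil)
                  (Walk.cons f3 (Walk.cons e4' (Walk.cons f0.symm Walk.nil)))
                  sup4a sup4b
                  (Walk.cons f0 (Walk.cons e1' (Walk.cons f1.symm (Walk.cons f1
                    (Walk.cons e2' (Walk.cons f2.symm (Walk.cons f2 (Walk.cons e3'
                      (Walk.cons f3.symm Walk.nil)))))))))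
                  Walk.nil
              have S5 : EdgeEquiv (cubeGraph n) F
                  (Walk.cons f0 (Walk.cons e1' (Walk.cons f1.symm (Walk.cons f1
                    (Walk.cons e2' (Walk.cons f2.symm (Walk.cons f2 (Walk.cons e3'
                      (Walk.cons f3.symm (Walk.cons f3 (Walk.cons e4'
                        (Walk.cons f0.symm Walk.nil))))))))))))
                  (Walk.cons f0 (Walk.cons e1' (Walk.cons e2' (Walk.cons f2.symm
                    (Walk.cons f2 (Walk.cons e3' (Walk.cons f3.symm (Walk.cons f3
                      (Walk.cons e4' (Walk.cons f0.symm Walk.nil)))))))))) :=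
                EdgeEquiv.backtrack f1.symm
                  (Walk.cons f0 (Walk.cons e1' Walk.nil))
                  (Walk.cons e2' (Walk.cons f2.symm (Walk.cons f2 (Walk.cons e3'
                    (Walk.cons f3.symm (Walk.cons f3 (Walk.cons e4'
                      (Walk.cons f0.symm Walk.nil))))))))
              have S6 : EdgeEquiv (cubeGraph n) F
                  (Walk.cons f0 (Walk.cons e1' (Walk.cons e2' (Walk.cons f2.symm
                    (Walk.cons f2 (Walk.cons e3' (Walk.cons f3.symm (Walk.cons f3
                      (Walk.cons e4' (Walk.cons f0.symm Walk.nil))))))))))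
                  (Walk.cons f0 (Walk.cons e1' (Walk.cons e2' (Walk.cons e3'
                    (Walk.cons f3.symm (Walk.cons f3 (Walk.cons e4'
                      (Walk.cons f0.symm Walk.nil)))))))) :=
                EdgeEquiv.backtrack f2.symm
                  (Walk.cons f0 (Walk.cons e1' (Walk.cons e2' Walk.nil)))
                  (Walk.cons e3' (Walk.cons f3.symm (Walk.cons f3 (Walk.cons e4'
                    (Walk.cons f0.symm Walk.nil)))))
              have S7 : EdgeEquiv (cubeGraph n) F
                  (Walk.cons f0 (Walk.cons e1' (Walk.cons e2' (Walk.cons e3'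
                    (Walk.cons f3.symm (Walk.cons f3 (Walk.cons e4'
                      (Walk.cons f0.symm Walk.nil))))))))
                  (Walk.cons f0 (Walk.cons e1' (Walk.cons e2' (Walk.cons e3'
                    (Walk.cons e4' (Walk.cons f0.symm Walk.nil)))))) :=
                EdgeEquiv.backtrack f3.symm
                  (Walk.cons f0 (Walk.cons e1' (Walk.cons e2' (Walk.cons e3' Walk.nil))))
                  (Walk.cons e4' (Walk.cons f0.symm Walk.nil))
              exact S1.trans (S2.trans (S3.trans (S4.trans (S5.trans (S6.trans S7)))))
end
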